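/- arXiv:0709.0986 — 2 statements merged into one kernel-verified Lean document; each statement's English description precedes it below -/
import Mathlib

section
/- Let K be a field and let Λ = Λ(D_n, 1, 2) as above (n ≥ 4). Define the set f² consisting of: f²₁,₁ = β₀β₁ − γ₀γ₁, f²₁,₂ = β₀β₁ − α_{n−2}⋯α₂α₁, f²₂,₁ = α₁β₀, f²₂,₂ = α₁γ₀, f²₂,₃ = β₁α_{n−2}, f²₂,₄ = γ₁α_{n−2}, f²₂,₅ = β₁β₀, f²₂,₆ = γ₁γ₀, and f²₃,ₖ = α_k⋯α₁α_{n−2}⋯α_k for 2 ≤ k ≤ n−3. Then f² is a minimal generating set of the defining ideal I of Λ; in particular no proper subset of f² generates I. -/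
noncomputable section

open Fin.NatCast

/-! ### The quiver `Q(D_n, 1)`: vertices `1, …, n` (vertex `v` ↦ index `v − 1` in `Fin n`),
arrows `α_{n−2} : 1 → n−2`, `α_l : l+1 → l` for `1 ≤ l ≤ n−3` (arrow `α_{k+1}` ↦ index `k`
in `Fin (n−2)`), `β₀ : 1 → n−1`, `β₁ : n−1 → 1`, `γ₀ : 1 → n`, `γ₁ : n → 1`. -/

/-- Generators for the path algebra of `Q(D_n, 1)`. -/
inductive DnGen (n : ℕ) : Type
  | e (i : Fin n) : DnGen n
  | al (k : Fin (n - 2)) : DnGen n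
  | b0 : DnGen n
  | b1 : DnGen n
  | c0 : DnGen n
  | c1 : DnGen n

variable (K : Type) [Field K]

abbrev DnFree (n : ℕ) : Type := FreeAlgebra K (DnGen n)

abbrev Dng {n : ℕ} (g : DnGen n) : DnFree K n := FreeAlgebra.ι K g

/-- The source vertex of the arrow `α_{k+1}`. -/
def DnAlSrc (n : ℕ) [NeZero n] (k : Fin (n - 2)) : Fin n :=
  if (k : ℕ) = n - 3 then 0 else ((k : ℕ) + 1 : ℕ)

/-- The target vertex of the arrow `α_{k+1}`. -/
def DnAlTgt (n : ℕ) [NeZero n] (k : Fin (n - 2)) : Fin n := ((k : ℕ) : Fin n)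

/-- The descending `α`-path `α_hi α_{hi−1} ⋯ α_lo` (1-based subscripts). -/
def Dnadown (n : ℕ) [NeZero (n - 2)] (hi lo : ℕ) : DnFree K n :=
  ((List.range (hi + 1 - lo)).map
    (fun t => Dng K (DnGen.al ((hi - 1 - t : ℕ) : Fin (n - 2))))).prod

/-- Path-algebra relations for the quiver `Q(D_n, 1)`: orthogonal idempotents for the
vertices summing to `1`, and each arrow supported at its source and target vertex. -/
inductive DnQuivRel (n : ℕ) [NeZero n] [NeZero (n - 2)] : DnFree K n → DnFree K n → Prop
  | idem (i j : Fin n) :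
      DnQuivRel n (Dng K (DnGen.e i) * Dng K (DnGen.e j)) (if i = j then Dng K (DnGen.e i) else 0)
  | vsum : DnQuivRel n (∑ i : Fin n, Dng K (DnGen.e i)) 1
  | alsrc (k : Fin (n - 2)) :
      DnQuivRel n (Dng K (DnGen.e (DnAlSrc n k)) * Dng K (DnGen.al k)) (Dng K (DnGen.al k))
  | altgt (k : Fin (n - 2)) :
      DnQuivRel n (Dng K (DnGen.al k) * Dng K (DnGen.e (DnAlTgt n k))) (Dng K (DnGen.al k))
  | b0src : DnQuivRel n (Dng K (DnGen.e 0) * Dng K DnGen.b0) (Dng K DnGen.b0)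
  | b0tgt : DnQuivRel n (Dng K DnGen.b0 * Dng K (DnGen.e ((n - 2 : ℕ) : Fin n))) (Dng K DnGen.b0)
  | b1src : DnQuivRel n (Dng K (DnGen.e ((n - 2 : ℕ) : Fin n)) * Dng K DnGen.b1) (Dng K DnGen.b1)
  | b1tgt : DnQuivRel n (Dng K DnGen.b1 * Dng K (DnGen.e 0)) (Dng K DnGen.b1)
  | c0src : DnQuivRel n (Dng K (DnGen.e 0) * Dng K DnGen.c0) (Dng K DnGen.c0)
  | c0tgt : DnQuivRel n (Dng K DnGen.c0 * Dng K (DnGen.e ((n - 1 : ℕ) : Fin n))) (Dng K DnGen.c0)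
  | c1src : DnQuivRel n (Dng K (DnGen.e ((n - 1 : ℕ) : Fin n)) * Dng K DnGen.c1) (Dng K DnGen.c1)
  | c1tgt : DnQuivRel n (Dng K DnGen.c1 * Dng K (DnGen.e 0)) (Dng K DnGen.c1)

/-- The relations `R(D_n, 1, 2)` of the algebra `Λ(D_n, 1, 2)`:
`β₀β₁ = γ₀γ₁ = α_{n−2}α_{n−3}⋯α₂α₁`, `α₁β₀ = 0`, `α₁γ₀ = 0`, `β₁α_{n−2} = 0`,
`γ₁α_{n−2} = 0`, `β₁β₀ = 0`, `γ₁γ₀ = 0`, and `α_k⋯α₁α_{n−2}⋯α_k = 0` for `2 ≤ k ≤ n−3`,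
together with the path-algebra relations of the quiver. -/
inductive DnRel2 (n : ℕ) [NeZero n] [NeZero (n - 2)] : DnFree K n → DnFree K n → Prop
  | quiv {x y : DnFree K n} : DnQuivRel K n x y → DnRel2 n x y
  | comm1 : DnRel2 n (Dng K DnGen.b0 * Dng K DnGen.b1) (Dng K DnGen.c0 * Dng K DnGen.c1)
  | comm2 : DnRel2 n (Dng K DnGen.b0 * Dng K DnGen.b1) (Dnadown K n (n - 2) 1)
  | z1 : DnRel2 n (Dng K (DnGen.al 0) * Dng K DnGen.b0) 0
  | z2 : DnRel2 n (Dng K (DnGen.al 0) * Dng K DnGen.c0) 0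
  | z3 : DnRel2 n (Dng K DnGen.b1 * Dng K (DnGen.al ((n - 3 : ℕ) : Fin (n - 2)))) 0
  | z4 : DnRel2 n (Dng K DnGen.c1 * Dng K (DnGen.al ((n - 3 : ℕ) : Fin (n - 2)))) 0
  | z5 : DnRel2 n (Dng K DnGen.b1 * Dng K DnGen.b0) 0
  | z6 : DnRel2 n (Dng K DnGen.c1 * Dng K DnGen.c0) 0
  | z7 (k : ℕ) (h1 : 2 ≤ k) (h2 : k ≤ n - 3) :
      DnRel2 n (Dnadown K n k 1 * Dnadown K n (n - 2) k) 0

/-- The self-injective algebra `Λ(D_n, 1, 2)` of Asashiba's classification. -/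
abbrev DnAlg2 (n : ℕ) [NeZero n] [NeZero (n - 2)] : Type := RingQuot (DnRel2 K n)

/-- The path algebra `KQ` of the quiver `Q(D_n, 1)`. -/
abbrev DnPathAlg (n : ℕ) [NeZero n] [NeZero (n - 2)] : Type := RingQuot (DnQuivRel K n)

/-- The canonical image of a free-algebra element in the path algebra. -/
abbrev Dnπ (n : ℕ) [NeZero n] [NeZero (n - 2)] (x : DnFree K n) : DnPathAlg K n :=
  RingQuot.mkAlgHom K (DnQuivRel K n) x

/-- The cyclic descending `α`-path of `len` arrows starting with `α_j`
(subscripts taken in `{1, …, n−2}` cyclically). -/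
def Dnacyc (n : ℕ) [NeZero (n - 2)] (j len : ℕ) : DnFree K n :=
  ((List.range len).map
    (fun t => Dng K (DnGen.al (((j - 1 : ℕ) : Fin (n - 2)) - ((t : ℕ) : Fin (n - 2)))))).prod

/-- The set of relations `R(D_n, 1, 2)` as elements of the path algebra `KQ`. -/
def DnRelSet (n : ℕ) [NeZero n] [NeZero (n - 2)] : Set (DnPathAlg K n) :=
  {Dnπ K n (Dng K DnGen.b0 * Dng K DnGen.b1 - Dng K DnGen.c0 * Dng K DnGen.c1),
   Dnπ K n (Dng K DnGen.b0 * Dng K DnGen.b1 - Dnadown K n (n - 2) 1),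
   Dnπ K n (Dng K (DnGen.al 0) * Dng K DnGen.b0),
   Dnπ K n (Dng K (DnGen.al 0) * Dng K DnGen.c0),
   Dnπ K n (Dng K DnGen.b1 * Dng K (DnGen.al ((n - 3 : ℕ) : Fin (n - 2)))),
   Dnπ K n (Dng K DnGen.c1 * Dng K (DnGen.al ((n - 3 : ℕ) : Fin (n - 2)))),
   Dnπ K n (Dng K DnGen.b1 * Dng K DnGen.b0),
   Dnπ K n (Dng K DnGen.c1 * Dng K DnGen.c0),
   Dnπ K n (Dng K DnGen.b0 * Dng K DnGen.b1 * Dng K DnGen.c0),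
   Dnπ K n (Dng K DnGen.c0 * Dng K DnGen.c1 * Dng K DnGen.b0),
   Dnπ K n (Dng K DnGen.b1 * Dng K DnGen.c0 * Dng K DnGen.c1),
   Dnπ K n (Dng K DnGen.c1 * Dng K DnGen.b0 * Dng K DnGen.b1)} ∪
  {x | ∃ j : ℕ, 1 ≤ j ∧ j ≤ n - 2 ∧ x = Dnπ K n (Dnacyc K n j (n - 1))}

/-- The proposed minimal generating set `f²` of the defining ideal, as elements of `KQ`. -/
def DnF2Set (n : ℕ) [NeZero n] [NeZero (n - 2)] : Set (DnPathAlg K n) :=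
  {Dnπ K n (Dng K DnGen.b0 * Dng K DnGen.b1 - Dng K DnGen.c0 * Dng K DnGen.c1),
   Dnπ K n (Dng K DnGen.b0 * Dng K DnGen.b1 - Dnadown K n (n - 2) 1),
   Dnπ K n (Dng K (DnGen.al 0) * Dng K DnGen.b0),
   Dnπ K n (Dng K (DnGen.al 0) * Dng K DnGen.c0),
   Dnπ K n (Dng K DnGen.b1 * Dng K (DnGen.al ((n - 3 : ℕ) : Fin (n - 2)))),
   Dnπ K n (Dng K DnGen.c1 * Dng K (DnGen.al ((n - 3 : ℕ) : Fin (n - 2)))),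
   Dnπ K n (Dng K DnGen.b1 * Dng K DnGen.b0),
   Dnπ K n (Dng K DnGen.c1 * Dng K DnGen.c0)} ∪
  {x | ∃ k : ℕ, 2 ≤ k ∧ k ≤ n - 3 ∧ x = Dnπ K n (Dnadown K n k 1 * Dnadown K n (n - 2) k)}


open Classical in
/-- conditional shift operator on `ℕ → K` -/
noncomputable def condShift (K : Type) [Field K] (c : ℕ → Prop) (σ : ℕ → ℕ) :
    (ℕ → K) →ₗ[K] (ℕ → K) where
  toFun v t := if c t then v (σ t) else 0
  map_add' u v := by funext t; by_cases h : c t <;> simp [h]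
  map_smul' a v := by funext t; by_cases h : c t <;> simp [h]

variable (K : Type) [Field K]

open Classical in
theorem condShift_apply (c : ℕ → Prop) (σ : ℕ → ℕ) (v : ℕ → K) (t : ℕ) :
    condShift K c σ v t = if c t then v (σ t) else 0 := rfl

theorem condShift_mul (c c' : ℕ → Prop) (σ σ' : ℕ → ℕ) :
    condShift K c σ * condShift K c' σ' =
      condShift K (fun t => c t ∧ c' (σ t)) (σ' ∘ σ) := by
  ext v t
  simp only [Module.End.mul_apply, condShift_apply]
  by_cases h : c t <;> by_cases h' : c' (σ t) <;> simp [h, h', condShift_apply]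

theorem condShift_congr {c c' : ℕ → Prop} {σ σ' : ℕ → ℕ}
    (h : ∀ t, (c t ↔ c' t) ∧ (c t → σ t = σ' t)) :
    condShift K c σ = condShift K c' σ' := by
  ext v t
  simp only [condShift_apply]
  by_cases hc : c t
  · rw [if_pos hc, if_pos ((h t).1.mp hc), (h t).2 hc]
  · rw [if_neg hc, if_neg (fun hc' => hc ((h t).1.mpr hc'))]

theorem condShift_false {c : ℕ → Prop} (σ : ℕ → ℕ) (h : ∀ t, ¬ c t) :
    condShift K c σ = 0 := by
  ext v t; simp [condShift_apply, h t]

theorem condShift_one : condShift K (fun _ => True) id = 1 := by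
  ext v t; simp [condShift_apply]

theorem condShift_sum {ι : Type*} [Fintype ι] (f : ℕ → ι) :
    ∑ i : ι, condShift K (fun t => f t = i) id = 1 := by
  ext v t
  simp only [LinearMap.sum_apply, condShift_apply, Module.End.one_apply, Finset.sum_apply,
    Pi.smul_apply]
  classical
  simp [Finset.sum_ite_eq]

theorem condShift_ne_zero {c : ℕ → Prop} {σ : ℕ → ℕ} (t : ℕ) (h : c t) :
    condShift K c σ ≠ 0 := by
  intro h0
  have := congrFun (congrArg (fun (F : (ℕ → K) →ₗ[K] (ℕ → K)) => F (fun _ => 1)) h0) t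
  simp [condShift_apply, h] at this
-- ### Section 2: word infrastructure

/-- A word in the generators, as an element of the free algebra. -/
def gword (n : ℕ) (l : List (DnGen n)) : DnFree K n := (l.map (Dng K)).prod

theorem gword_append (n : ℕ) (l l' : List (DnGen n)) :
    gword K n (l ++ l') = gword K n l * gword K n l' := by
  simp [gword]

theorem gword_pair (n : ℕ) (g g' : DnGen n) :
    Dng K g * Dng K g' = gword K n [g, g'] := by
  simp [gword]

theorem gword_single (n : ℕ) (g : DnGen n) : Dng K g = gword K n [g] := by
  simp [gword]

def downList (n : ℕ) [NeZero (n - 2)] (hi lo : ℕ) : List (DnGen n) :=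
  (List.range (hi + 1 - lo)).map (fun t => DnGen.al ((hi - 1 - t : ℕ) : Fin (n - 2)))

def cycList (n : ℕ) [NeZero (n - 2)] (j len : ℕ) : List (DnGen n) :=
  (List.range len).map
    (fun t => DnGen.al (((j - 1 : ℕ) : Fin (n - 2)) - ((t : ℕ) : Fin (n - 2))))

theorem Dnadown_eq (n : ℕ) [NeZero (n - 2)] (hi lo : ℕ) :
    Dnadown K n hi lo = gword K n (downList n hi lo) := by
  simp [Dnadown, gword, downList, List.map_map]; rfl

theorem Dnacyc_eq (n : ℕ) [NeZero (n - 2)] (j len : ℕ) :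
    Dnacyc K n j len = gword K n (cycList n j len) := by
  simp [Dnacyc, gword, cycList, List.map_map]; rfl

theorem downList_length (n : ℕ) [NeZero (n - 2)] (hi lo : ℕ) : (downList n hi lo).length = hi + 1 - lo := by
  simp [downList]

theorem cycList_length (n : ℕ) [NeZero (n - 2)] (j len : ℕ) : (cycList n j len).length = len := by
  simp [cycList]

theorem downList_get (n : ℕ) [NeZero (n - 2)] (hi lo : ℕ) (i : ℕ) (h : i < hi + 1 - lo) :
    (downList n hi lo)[i]'(by simpa [downList_length] using h) =
      DnGen.al ((hi - 1 - i : ℕ) : Fin (n - 2)) := by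
  simp [downList]

theorem cycList_get (n : ℕ) [NeZero (n - 2)] (j len : ℕ) (i : ℕ) (h : i < len) :
    (cycList n j len)[i]'(by simpa [cycList_length] using h) =
      DnGen.al (((j - 1 : ℕ) : Fin (n - 2)) - ((i : ℕ) : Fin (n - 2))) := by
  simp [cycList]
-- ### Section 3: Fin arithmetic helpers

theorem finCast_val {m : ℕ} [NeZero m] {a : ℕ} (h : a < m) : ((a : Fin m) : ℕ) = a := by
  simp [Fin.val_natCast, Nat.mod_eq_of_lt h]

theorem finCast_inj {m : ℕ} [NeZero m] {a b : ℕ} (ha : a < m) (hb : b < m)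
    (h : (a : Fin m) = (b : Fin m)) : a = b := by
  have := congrArg Fin.val h
  rwa [finCast_val ha, finCast_val hb] at this

theorem fin_sub_eq_of_le {m : ℕ} [NeZero m] {a b : ℕ} (hb : b ≤ a) (ha : a < m) :
    (a : Fin m) - (b : Fin m) = ((a - b : ℕ) : Fin m) := by
  have hm : 0 < m := Nat.pos_of_ne_zero (NeZero.ne m)
  apply Fin.ext
  rw [Fin.sub_def]
  simp only [finCast_val ha, finCast_val (lt_of_le_of_lt hb ha),
    finCast_val (by omega : a - b < m)]
  show (m - b + a) % m = a - b
  rw [show m - b + a = a - b + m by omega, Nat.add_mod_right, Nat.mod_eq_of_lt (by omega)]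

theorem fin_sub_wrap {m : ℕ} [NeZero m] {a c : ℕ} (ha : a < m) (hc : c < m) :
    (a : Fin m) - ((a + 1 + c : ℕ) : Fin m) = ((m - 1 - c : ℕ) : Fin m) := by
  have hm : 0 < m := Nat.pos_of_ne_zero (NeZero.ne m)
  apply Fin.ext
  rw [Fin.sub_def]
  simp only [finCast_val ha, finCast_val (by omega : m - 1 - c < m), Fin.val_natCast]
  show (m - (a + 1 + c) % m + a) % m = m - 1 - c
  rcases Nat.lt_or_ge (a + 1 + c) m with h | h
  · rw [Nat.mod_eq_of_lt h, Nat.mod_eq_of_lt (by omega)]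
    omega
  · rw [show (a + 1 + c) % m = a + 1 + c - m by
      rw [Nat.mod_eq_sub_mod h, Nat.mod_eq_of_lt (by omega)]]
    rw [show m - (a + 1 + c - m) + a = m - 1 - c + m by omega, Nat.add_mod_right,
      Nat.mod_eq_of_lt (by omega)]

-- ### concatenation lemma: `downList k 1 ++ downList (n-2) k = cycList k (n-1)`

theorem downList_concat (n : ℕ) [NeZero (n - 2)] (hn : 4 ≤ n) (k : ℕ) (hk1 : 1 ≤ k)
    (hk2 : k ≤ n - 2) :
    downList n k 1 ++ downList n (n - 2) k = cycList n k (n - 1) := by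
  have hm : 2 ≤ n - 2 := by omega
  unfold downList cycList
  rw [show n - 1 = k + (n - 1 - k) by omega, List.range_add, List.map_append, List.map_map]
  congr 1
  · rw [show k + 1 - 1 = k from rfl]
    apply List.map_congr_left
    intro t ht
    rw [List.mem_range] at ht
    congr 1
    rw [fin_sub_eq_of_le (by omega) (by omega)]
  · rw [show n - 2 + 1 - k = n - 1 - k by omega]
    apply List.map_congr_left
    intro t ht
    rw [List.mem_range] at ht
    simp only [Function.comp]
    congr 1
    rw [show (k + t : ℕ) = (k - 1) + 1 + t by omega, fin_sub_wrap (by omega) (by omega)]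
-- ### Section 4: walk representations

def gsrc (n : ℕ) [NeZero n] [NeZero (n - 2)] : DnGen n → Fin n
  | .e _ => 0
  | .al k => DnAlSrc n k
  | .b0 => 0
  | .b1 => ((n - 2 : ℕ) : Fin n)
  | .c0 => 0
  | .c1 => ((n - 1 : ℕ) : Fin n)

def gtgt (n : ℕ) [NeZero n] [NeZero (n - 2)] : DnGen n → Fin n
  | .e _ => 0
  | .al k => DnAlTgt n k
  | .b0 => ((n - 2 : ℕ) : Fin n)
  | .b1 => 0
  | .c0 => ((n - 1 : ℕ) : Fin n)
  | .c1 => 0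

def notE {n : ℕ} : DnGen n → Prop
  | .e _ => False
  | _ => True

def arrShift (n N : ℕ) (step : ℕ → DnGen n) (g : DnGen n) : Module.End K (ℕ → K) :=
  condShift K (fun t => t < N ∧ step t = g) (· + 1)

def repGen (n N : ℕ) (step : ℕ → DnGen n) (vl : ℕ → Fin n) : DnGen n → Module.End K (ℕ → K)
  | .e i => condShift K (fun t => vl t = i) id
  | .al k => arrShift K n N step (.al k)
  | .b0 => arrShift K n N step .b0
  | .b1 => arrShift K n N step .b1
  | .c0 => arrShift K n N step .c0
  | .c1 => arrShift K n N step .c1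

theorem repGen_notE {n N : ℕ} {step : ℕ → DnGen n} {vl : ℕ → Fin n} {g : DnGen n}
    (h : notE g) : repGen K n N step vl g = arrShift K n N step g := by
  cases g <;> first | exact (h.elim) | rfl

def repHom (n N : ℕ) (step : ℕ → DnGen n) (vl : ℕ → Fin n) :
    DnFree K n →ₐ[K] Module.End K (ℕ → K) :=
  FreeAlgebra.lift K (repGen K n N step vl)

theorem repHom_gen (n N : ℕ) (step : ℕ → DnGen n) (vl : ℕ → Fin n) (g : DnGen n) :
    repHom K n N step vl (Dng K g) = repGen K n N step vl g :=
  FreeAlgebra.lift_ι_apply _ _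

theorem repHom_quiv (n N : ℕ) [NeZero n] [NeZero (n - 2)]
    (step : ℕ → DnGen n) (vl : ℕ → Fin n)
    (hs : ∀ t, t < N → vl t = gsrc n (step t))
    (ht : ∀ t, t < N → vl (t + 1) = gtgt n (step t)) :
    ∀ ⦃x y : DnFree K n⦄, DnQuivRel K n x y → repHom K n N step vl x = repHom K n N step vl y := by
  have hsrc : ∀ (g : DnGen n), notE g →
      repHom K n N step vl (Dng K (DnGen.e (gsrc n g)) * Dng K g) =
        repHom K n N step vl (Dng K g) := by
    intro g hg
    rw [map_mul, repHom_gen, repHom_gen, repGen, repGen_notE K hg, arrShift, condShift_mul]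
    apply condShift_congr
    intro t
    refine ⟨⟨fun h => h.2, fun h => ⟨?_, ⟨h.1, h.2⟩⟩⟩, fun _ => rfl⟩
    rw [hs t h.1, h.2]
  have htgt : ∀ (g : DnGen n), notE g →
      repHom K n N step vl (Dng K g * Dng K (DnGen.e (gtgt n g))) =
        repHom K n N step vl (Dng K g) := by
    intro g hg
    rw [map_mul, repHom_gen, repHom_gen, repGen, repGen_notE K hg, arrShift, condShift_mul]
    apply condShift_congr
    intro t
    refine ⟨⟨fun h => h.1, fun h => ⟨h, ?_⟩⟩, fun _ => rfl⟩
    show vl (t + 1) = gtgt n g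
    rw [ht t h.1, h.2]
  intro x y h
  induction h with
  | idem i j =>
      rw [map_mul, repHom_gen, repHom_gen]
      show condShift K _ _ * condShift K _ _ = _
      rw [condShift_mul]
      by_cases hij : i = j
      · subst hij
        rw [if_pos rfl, repHom_gen]
        exact condShift_congr K (fun t => ⟨⟨fun h => h.1, fun h => ⟨h, h⟩⟩, fun _ => rfl⟩)
      · rw [if_neg hij, map_zero]
        exact condShift_false K _ (fun t h => hij (h.1.symm.trans h.2))
  | vsum =>
      rw [map_sum, map_one]
      have : ∀ i : Fin n, repHom K n N step vl (Dng K (DnGen.e i)) =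
          condShift K (fun t => vl t = i) id := fun i => repHom_gen K n N step vl _
      simp_rw [this]
      exact condShift_sum K vl
  | alsrc k => exact hsrc (.al k) trivial
  | altgt k => exact htgt (.al k) trivial
  | b0src => exact hsrc .b0 trivial
  | b0tgt => exact htgt .b0 trivial
  | b1src => exact hsrc .b1 trivial
  | b1tgt => exact htgt .b1 trivial
  | c0src => exact hsrc .c0 trivial
  | c0tgt => exact htgt .c0 trivial
  | c1src => exact hsrc .c1 trivial
  | c1tgt => exact htgt .c1 trivial

def wordCond (n N : ℕ) (step : ℕ → DnGen n) (l : List (DnGen n)) (t : ℕ) : Prop :=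
  ∀ i (h : i < l.length), t + i < N ∧ step (t + i) = l[i]'h

theorem repHom_gword (n N : ℕ) (step : ℕ → DnGen n) (vl : ℕ → Fin n)
    (l : List (DnGen n)) (hl : ∀ g ∈ l, notE g) :
    repHom K n N step vl (gword K n l) =
      condShift K (wordCond n N step l) (· + l.length) := by
  induction l with
  | nil =>
      rw [show gword K n ([] : List (DnGen n)) = 1 from by simp [gword], map_one]
      have : condShift K (wordCond n N step ([] : List (DnGen n))) (· + ([] : List (DnGen n)).length)
          = condShift K (fun _ => True) id := by
        apply condShift_congr
        intro t
        exact ⟨⟨fun _ => trivial, fun _ i h => absurd h (by simp)⟩, fun _ => by simp⟩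
      rw [this, condShift_one]
  | cons g l ih =>
      have hg : notE g := hl g (by simp)
      rw [show gword K n (g :: l) = Dng K g * gword K n l from by simp [gword], map_mul,
        repHom_gen, repGen_notE K hg, ih (fun g' hg' => hl g' (by simp [hg'])), arrShift,
        condShift_mul]
      apply condShift_congr
      intro t
      constructor
      · constructor
        · rintro ⟨⟨h1, h2⟩, h3⟩ i hi
          cases i with
          | zero => exact ⟨by omega, by simpa using h2⟩
          | succ i =>
              obtain ⟨h4, h5⟩ := h3 i (by simpa using hi)
              exact ⟨by omega, by rw [show t + (i+1) = t + 1 + i by omega, h5]; simp⟩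
        · intro h
          obtain ⟨h1, h2⟩ := h 0 (by simp)
          refine ⟨⟨by omega, by simpa using h2⟩, fun i hi => ?_⟩
          obtain ⟨h3, h4⟩ := h (i + 1) (by simpa using Nat.succ_lt_succ hi)
          exact ⟨by omega, by rw [show t + 1 + i = t + (i+1) by omega, h4]; simp⟩
      · intro _
        show t + 1 + l.length = t + (g :: l).length
        simp; omega

theorem repHom_gword_zero_pos (n N : ℕ) (step : ℕ → DnGen n) (vl : ℕ → Fin n)
    (l : List (DnGen n)) (hl : ∀ g ∈ l, notE g) (i0 : ℕ) (hi : i0 < l.length)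
    (h : ∀ t, t < N → step t ≠ l[i0]'hi) :
    repHom K n N step vl (gword K n l) = 0 := by
  rw [repHom_gword K n N step vl l hl]
  apply condShift_false
  intro t hc
  obtain ⟨h1, h2⟩ := hc i0 hi
  exact h _ h1 h2

theorem repHom_gword_zero_len (n N : ℕ) (step : ℕ → DnGen n) (vl : ℕ → Fin n)
    (l : List (DnGen n)) (hl : ∀ g ∈ l, notE g) (h : N + 1 ≤ l.length) :
    repHom K n N step vl (gword K n l) = 0 := by
  rw [repHom_gword K n N step vl l hl]
  apply condShift_false
  intro t hc
  exact absurd (hc N (by omega)).1 (by omega)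

theorem repHom_gword_ne_zero (n N : ℕ) (step : ℕ → DnGen n) (vl : ℕ → Fin n)
    (l : List (DnGen n)) (hl : ∀ g ∈ l, notE g) (t : ℕ) (h : wordCond n N step l t) :
    repHom K n N step vl (gword K n l) ≠ 0 := by
  rw [repHom_gword K n N step vl l hl]
  exact condShift_ne_zero K t h

def repQuot (n N : ℕ) [NeZero n] [NeZero (n - 2)] (step : ℕ → DnGen n) (vl : ℕ → Fin n)
    (hs : ∀ t, t < N → vl t = gsrc n (step t))
    (ht : ∀ t, t < N → vl (t + 1) = gtgt n (step t)) :
    DnPathAlg K n →ₐ[K] Module.End K (ℕ → K) :=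
  RingQuot.liftAlgHom K ⟨repHom K n N step vl, repHom_quiv K n N step vl hs ht⟩

theorem repQuot_π (n N : ℕ) [NeZero n] [NeZero (n - 2)] (step : ℕ → DnGen n) (vl : ℕ → Fin n)
    (hs : ∀ t, t < N → vl t = gsrc n (step t))
    (ht : ∀ t, t < N → vl (t + 1) = gtgt n (step t)) (x : DnFree K n) :
    repQuot K n N step vl hs ht (Dnπ K n x) = repHom K n N step vl x :=
  RingQuot.liftAlgHom_mkAlgHom_apply _ _ _ _
-- ### Section 5: generic vanishing helpers

section Reps

variable (n N : ℕ) [NeZero n] [NeZero (n - 2)] (step : ℕ → DnGen n) (vl : ℕ → Fin n)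

theorem notE_pair (g g' : DnGen n) (h : notE g) (h' : notE g') :
    ∀ x ∈ [g, g'], notE x := by
  intro x hx
  simp only [List.mem_cons, List.not_mem_nil, or_false] at hx
  rcases hx with rfl | rfl
  · exact h
  · exact h'

theorem notE_down (hi lo : ℕ) : ∀ g ∈ downList n hi lo, notE g := by
  intro g hg
  obtain ⟨t, _, rfl⟩ := List.mem_map.mp hg
  trivial

theorem notE_cyc (j len : ℕ) : ∀ g ∈ cycList n j len, notE g := by
  intro g hg
  obtain ⟨t, _, rfl⟩ := List.mem_map.mp hg
  trivial

theorem pair0 (g g' : DnGen n) (hg : notE g) (hg' : notE g')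
    (h : ∀ t, t < N → step t ≠ g) :
    repHom K n N step vl (Dng K g * Dng K g') = 0 := by
  rw [gword_pair]
  exact repHom_gword_zero_pos K n N step vl _ (notE_pair n g g' hg hg') 0 (by simp)
    (by simpa using h)

theorem pair1 (g g' : DnGen n) (hg : notE g) (hg' : notE g')
    (h : ∀ t, t < N → step t ≠ g') :
    repHom K n N step vl (Dng K g * Dng K g') = 0 := by
  rw [gword_pair]
  exact repHom_gword_zero_pos K n N step vl _ (notE_pair n g g' hg hg') 1 (by simp)
    (by simpa using h)

theorem down_head (hn : 4 ≤ n) :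
    (downList n (n - 2) 1)[0]'(by rw [downList_length]; omega) =
      DnGen.al ((n - 3 : ℕ) : Fin (n - 2)) := by
  rw [downList_get n (n - 2) 1 0 (by omega)]
  rw [show n - 2 - 1 - 0 = n - 3 by omega]

theorem down_zero_head (hn : 4 ≤ n)
    (h : ∀ t, t < N → step t ≠ DnGen.al ((n - 3 : ℕ) : Fin (n - 2))) :
    repHom K n N step vl (Dnadown K n (n - 2) 1) = 0 := by
  rw [Dnadown_eq]
  refine repHom_gword_zero_pos K n N step vl _ (notE_down n _ _) 0
    (by rw [downList_length]; omega) ?_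
  rw [down_head n hn]
  exact h

theorem x9_eq_cyc (hn : 4 ≤ n) (k : ℕ) (h1 : 1 ≤ k) (h2 : k ≤ n - 2) :
    Dnadown K n k 1 * Dnadown K n (n - 2) k = Dnacyc K n k (n - 1) := by
  rw [Dnadown_eq, Dnadown_eq, Dnacyc_eq, ← gword_append, downList_concat n hn k h1 h2]

theorem x9_zero_len (hn : 4 ≤ n) (k : ℕ) (h1 : 1 ≤ k) (h2 : k ≤ n - 2)
    (hlen : N + 1 ≤ n - 1) :
    repHom K n N step vl (Dnadown K n k 1 * Dnadown K n (n - 2) k) = 0 := by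
  rw [x9_eq_cyc K n hn k h1 h2, Dnacyc_eq]
  exact repHom_gword_zero_len K n N step vl _ (notE_cyc n _ _)
    (by rw [cycList_length]; omega)

theorem pair_manual (g g' : DnGen n) (hg : notE g) (hg' : notE g')
    (h : ∀ t, ¬ (t < N ∧ step t = g ∧ t + 1 < N ∧ step (t + 1) = g')) :
    repHom K n N step vl (Dng K g * Dng K g') = 0 := by
  rw [gword_pair, repHom_gword K n N step vl _ (notE_pair n g g' hg hg')]
  apply condShift_false
  intro t hc
  obtain ⟨h0, e0⟩ := hc 0 (by simp)
  obtain ⟨h1, e1⟩ := hc 1 (by simp)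
  simp only [List.getElem_cons_zero, List.getElem_cons_succ, Nat.add_zero] at e0 e1 h0 h1
  exact h t ⟨by simpa using h0, by simpa using e0, h1, e1⟩

end Reps
set_option linter.unusedSectionVars false

-- ### Section 6: building representations from walks

section MkRep

variable (n N : ℕ) [NeZero n] [NeZero (n - 2)] (step : ℕ → DnGen n)

def stepVl (t : ℕ) : Fin n :=
  if t = 0 then gsrc n (step 0) else gtgt n (step (t - 1))

theorem stepVl_hs (hcons : ∀ t, 1 ≤ t → t < N → gtgt n (step (t - 1)) = gsrc n (step t)) :
    ∀ t, t < N → stepVl n step t = gsrc n (step t) := by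
  intro t h
  cases t with
  | zero => rfl
  | succ t => simpa [stepVl] using hcons (t + 1) (by omega) h

theorem stepVl_ht : ∀ t, t < N → stepVl n step (t + 1) = gtgt n (step t) := by
  intro t _
  simp [stepVl]

def mkRep (hcons : ∀ t, 1 ≤ t → t < N → gtgt n (step (t - 1)) = gsrc n (step t)) :
    DnPathAlg K n →ₐ[K] Module.End K (ℕ → K) :=
  repQuot K n N step (stepVl n step) (stepVl_hs n N step hcons) (stepVl_ht n N step)

theorem mkRep_π (hcons : ∀ t, 1 ≤ t → t < N → gtgt n (step (t - 1)) = gsrc n (step t))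
    (x : DnFree K n) :
    mkRep K n N step hcons (Dnπ K n x) = repHom K n N step (stepVl n step) x :=
  repQuot_π K n N step _ _ _ x

theorem srcEqTgtSucc (hn : 4 ≤ n) (j : Fin (n - 2)) : DnAlSrc n j = DnAlTgt n (j + 1) := by
  have hm : 2 ≤ n - 2 := by omega
  unfold DnAlSrc DnAlTgt
  have hone : ((1 : Fin (n - 2)) : ℕ) = 1 := by
    simp [Fin.val_one', Nat.mod_eq_of_lt hm]
  rcases eq_or_ne (j : ℕ) (n - 3) with h | h
  · rw [if_pos h]
    have : ((j + 1 : Fin (n - 2)) : ℕ) = 0 := by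
      rw [Fin.add_def]
      show ((j : ℕ) + _) % (n - 2) = 0
      rw [hone, h, show n - 3 + 1 = n - 2 by omega, Nat.mod_self]
    rw [this, Nat.cast_zero]
  · rw [if_neg h]
    have hj : (j : ℕ) < n - 3 := by have := j.isLt; omega
    have : ((j + 1 : Fin (n - 2)) : ℕ) = (j : ℕ) + 1 := by
      rw [Fin.add_def]
      show ((j : ℕ) + _) % (n - 2) = _
      rw [hone, Nat.mod_eq_of_lt (by omega)]
    rw [this]

end MkRep

-- ### R1: the walk `γ₀ γ₁`, separating `f²₁,₁ = β₀β₁ − γ₀γ₁`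

section R1

variable (n : ℕ) [NeZero n] [NeZero (n - 2)]

def S1 : ℕ → DnGen n := fun t => if t = 0 then DnGen.c0 else DnGen.c1

theorem S1cons : ∀ t, 1 ≤ t → t < 2 → gtgt n (S1 n (t - 1)) = gsrc n (S1 n t) := by
  intro t h1 h2
  interval_cases t
  rfl

theorem R1_kills (hn : 4 ≤ n) :
    ∀ g ∈ DnF2Set K n,
      g ≠ Dnπ K n (Dng K DnGen.b0 * Dng K DnGen.b1 - Dng K DnGen.c0 * Dng K DnGen.c1) →
      mkRep K n 2 (S1 n) (S1cons n) g = 0 := by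
  have hb0 : ∀ t, t < 2 → S1 n t ≠ DnGen.b0 := by
    intro t _; by_cases h : t = 0 <;> simp [S1, h]
  have hb1 : ∀ t, t < 2 → S1 n t ≠ DnGen.b1 := by
    intro t _; by_cases h : t = 0 <;> simp [S1, h]
  have hal : ∀ (j : Fin (n - 2)) t, t < 2 → S1 n t ≠ DnGen.al j := by
    intro j t _; by_cases h : t = 0 <;> simp [S1, h]
  intro g hg hne
  rcases hg with hg | hg
  · simp only [Set.mem_insert_iff, Set.mem_singleton_iff] at hg
    rcases hg with rfl | rfl | rfl | rfl | rfl | rfl | rfl | rfl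
    · exact absurd rfl hne
    · rw [mkRep_π, map_sub,
        pair0 K n 2 _ _ _ _ (by trivial) (by trivial) hb0,
        down_zero_head K n 2 _ _ hn (hal _), sub_zero]
    · rw [mkRep_π, pair0 K n 2 _ _ _ _ (by trivial) (by trivial) (hal _)]
    · rw [mkRep_π, pair0 K n 2 _ _ _ _ (by trivial) (by trivial) (hal _)]
    · rw [mkRep_π, pair0 K n 2 _ _ _ _ (by trivial) (by trivial) hb1]
    · rw [mkRep_π, pair1 K n 2 _ _ _ _ (by trivial) (by trivial) (hal _)]
    · rw [mkRep_π, pair0 K n 2 _ _ _ _ (by trivial) (by trivial) hb1]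
    · rw [mkRep_π, pair_manual K n 2 _ _ _ _ (by trivial) (by trivial) ?_]
      rintro t ⟨h1, h2, h3, -⟩
      interval_cases t
      · simp [S1] at h2
      · omega
  · obtain ⟨k, hk2, hk3, rfl⟩ := hg
    rw [mkRep_π, x9_zero_len K n 2 _ _ hn k (by omega) (by omega) (by omega)]

theorem R1_nonzero (hn : 4 ≤ n) :
    mkRep K n 2 (S1 n) (S1cons n)
      (Dnπ K n (Dng K DnGen.b0 * Dng K DnGen.b1 - Dng K DnGen.c0 * Dng K DnGen.c1)) ≠ 0 := by
  rw [mkRep_π, map_sub, pair0 K n 2 _ _ _ _ (by trivial) (by trivial)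
    (by intro t _; by_cases h : t = 0 <;> simp [S1, h]), zero_sub, neg_ne_zero, gword_pair]
  apply repHom_gword_ne_zero K n 2 _ _ _ (notE_pair n _ _ (by trivial) (by trivial)) 0
  intro i hi
  have hi2 : i < 2 := by simpa using hi
  interval_cases i <;> simp [S1]

end R1
-- ### R2: the walk `α_{n-2} ⋯ α_1`, separating `f²₁,₂ = β₀β₁ − α_{n-2}⋯α_1`

section R2

variable (n : ℕ) [NeZero n] [NeZero (n - 2)]

def S2 : ℕ → DnGen n := fun t => DnGen.al ((n - 3 - t : ℕ) : Fin (n - 2))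

theorem S2cons (hn : 4 ≤ n) :
    ∀ t, 1 ≤ t → t < n - 2 → gtgt n (S2 n (t - 1)) = gsrc n (S2 n t) := by
  intro t h1 h2
  show gtgt n (DnGen.al _) = gsrc n (DnGen.al _)
  show DnAlTgt n _ = DnAlSrc n _
  rw [show (n - 3 - (t - 1) : ℕ) = (n - 3 - t) + 1 by omega, Nat.cast_add_one,
    srcEqTgtSucc n hn]

theorem R2_kills (hn : 4 ≤ n) :
    ∀ g ∈ DnF2Set K n,
      g ≠ Dnπ K n (Dng K DnGen.b0 * Dng K DnGen.b1 - Dnadown K n (n - 2) 1) →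
      mkRep K n (n - 2) (S2 n) (S2cons n hn) g = 0 := by
  have hb0 : ∀ t, t < n - 2 → S2 n t ≠ DnGen.b0 := by intro t _; simp [S2]
  have hb1 : ∀ t, t < n - 2 → S2 n t ≠ DnGen.b1 := by intro t _; simp [S2]
  have hc0 : ∀ t, t < n - 2 → S2 n t ≠ DnGen.c0 := by intro t _; simp [S2]
  have hc1 : ∀ t, t < n - 2 → S2 n t ≠ DnGen.c1 := by intro t _; simp [S2]
  intro g hg hne
  rcases hg with hg | hg
  · simp only [Set.mem_insert_iff, Set.mem_singleton_iff] at hg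
    rcases hg with rfl | rfl | rfl | rfl | rfl | rfl | rfl | rfl
    · rw [mkRep_π, map_sub, pair0 K n (n-2) _ _ _ _ (by trivial) (by trivial) hb0,
        pair0 K n (n-2) _ _ _ _ (by trivial) (by trivial) hc0, sub_zero]
    · exact absurd rfl hne
    · rw [mkRep_π, pair1 K n (n-2) _ _ _ _ (by trivial) (by trivial) hb0]
    · rw [mkRep_π, pair1 K n (n-2) _ _ _ _ (by trivial) (by trivial) hc0]
    · rw [mkRep_π, pair0 K n (n-2) _ _ _ _ (by trivial) (by trivial) hb1]
    · rw [mkRep_π, pair0 K n (n-2) _ _ _ _ (by trivial) (by trivial) hc1]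
    · rw [mkRep_π, pair0 K n (n-2) _ _ _ _ (by trivial) (by trivial) hb1]
    · rw [mkRep_π, pair0 K n (n-2) _ _ _ _ (by trivial) (by trivial) hc1]
  · obtain ⟨k, hk2, hk3, rfl⟩ := hg
    rw [mkRep_π, x9_zero_len K n (n-2) _ _ hn k (by omega) (by omega) (by omega)]

theorem R2_nonzero (hn : 4 ≤ n) :
    mkRep K n (n - 2) (S2 n) (S2cons n hn)
      (Dnπ K n (Dng K DnGen.b0 * Dng K DnGen.b1 - Dnadown K n (n - 2) 1)) ≠ 0 := by
  rw [mkRep_π, map_sub, pair0 K n (n-2) _ _ _ _ (by trivial) (by trivial)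
    (by intro t _; simp [S2]), zero_sub, neg_ne_zero, Dnadown_eq]
  apply repHom_gword_ne_zero K n (n-2) _ _ _ (notE_down n _ _) 0
  intro i hi
  rw [downList_length] at hi
  constructor
  · omega
  · rw [downList_get n (n - 2) 1 i hi]
    show DnGen.al _ = DnGen.al _
    rw [show (n - 3 - (0 + i) : ℕ) = n - 2 - 1 - i by omega]

end R2

-- ### R3 / R4: walks `α₁ β₀` and `α₁ γ₀`, separating `f²₂,₁` and `f²₂,₂`

section R34

variable (n : ℕ) [NeZero n] [NeZero (n - 2)]

def S3 : ℕ → DnGen n := fun t => if t = 0 then DnGen.al 0 else DnGen.b0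

def S4 : ℕ → DnGen n := fun t => if t = 0 then DnGen.al 0 else DnGen.c0

theorem S3cons : ∀ t, 1 ≤ t → t < 2 → gtgt n (S3 n (t - 1)) = gsrc n (S3 n t) := by
  intro t h1 h2
  interval_cases t
  show DnAlTgt n 0 = (0 : Fin n)
  simp [DnAlTgt]

theorem S4cons : ∀ t, 1 ≤ t → t < 2 → gtgt n (S4 n (t - 1)) = gsrc n (S4 n t) := by
  intro t h1 h2
  interval_cases t
  show DnAlTgt n 0 = (0 : Fin n)
  simp [DnAlTgt]

theorem fin0_ne (hn : 4 ≤ n) : ¬ (0 : Fin (n - 2)) = ((n - 3 : ℕ) : Fin (n - 2)) := by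
  intro h
  have := finCast_inj (m := n - 2) (a := 0) (b := n - 3) (by omega) (by omega)
    (by rw [Nat.cast_zero]; exact h)
  omega

theorem R3_kills (hn : 4 ≤ n) :
    ∀ g ∈ DnF2Set K n,
      g ≠ Dnπ K n (Dng K (DnGen.al 0) * Dng K DnGen.b0) →
      mkRep K n 2 (S3 n) (S3cons n) g = 0 := by
  have hb1 : ∀ t, t < 2 → S3 n t ≠ DnGen.b1 := by
    intro t _; by_cases h : t = 0 <;> simp [S3, h]
  have hc0 : ∀ t, t < 2 → S3 n t ≠ DnGen.c0 := by
    intro t _; by_cases h : t = 0 <;> simp [S3, h]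
  have hc1 : ∀ t, t < 2 → S3 n t ≠ DnGen.c1 := by
    intro t _; by_cases h : t = 0 <;> simp [S3, h]
  have haln : ∀ t, t < 2 → S3 n t ≠ DnGen.al ((n - 3 : ℕ) : Fin (n - 2)) := by
    intro t _; by_cases h : t = 0 <;> simp [S3, h]
    exact fin0_ne n hn
  have hb0b1 : repHom K n 2 (S3 n) (stepVl n (S3 n)) (Dng K DnGen.b0 * Dng K DnGen.b1) = 0 := by
    apply pair_manual K n 2 _ _ _ _ (by trivial) (by trivial)
    rintro t ⟨h1, h2, h3, -⟩
    interval_cases t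
    · simp [S3] at h2
    · omega
  intro g hg hne
  rcases hg with hg | hg
  · simp only [Set.mem_insert_iff, Set.mem_singleton_iff] at hg
    rcases hg with rfl | rfl | rfl | rfl | rfl | rfl | rfl | rfl
    · rw [mkRep_π, map_sub, hb0b1, pair0 K n 2 _ _ _ _ (by trivial) (by trivial) hc0, sub_zero]
    · rw [mkRep_π, map_sub, hb0b1, down_zero_head K n 2 _ _ hn haln, sub_zero]
    · exact absurd rfl hne
    · rw [mkRep_π, pair1 K n 2 _ _ _ _ (by trivial) (by trivial) hc0]
    · rw [mkRep_π, pair0 K n 2 _ _ _ _ (by trivial) (by trivial) hb1]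
    · rw [mkRep_π, pair0 K n 2 _ _ _ _ (by trivial) (by trivial) hc1]
    · rw [mkRep_π, pair0 K n 2 _ _ _ _ (by trivial) (by trivial) hb1]
    · rw [mkRep_π, pair0 K n 2 _ _ _ _ (by trivial) (by trivial) hc1]
  · obtain ⟨k, hk2, hk3, rfl⟩ := hg
    rw [mkRep_π, x9_zero_len K n 2 _ _ hn k (by omega) (by omega) (by omega)]

theorem R3_nonzero (hn : 4 ≤ n) :
    mkRep K n 2 (S3 n) (S3cons n)
      (Dnπ K n (Dng K (DnGen.al 0) * Dng K DnGen.b0)) ≠ 0 := by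
  rw [mkRep_π, gword_pair]
  apply repHom_gword_ne_zero K n 2 _ _ _ (notE_pair n _ _ (by trivial) (by trivial)) 0
  intro i hi
  have hi2 : i < 2 := by simpa using hi
  interval_cases i <;> simp [S3]

theorem R4_kills (hn : 4 ≤ n) :
    ∀ g ∈ DnF2Set K n,
      g ≠ Dnπ K n (Dng K (DnGen.al 0) * Dng K DnGen.c0) →
      mkRep K n 2 (S4 n) (S4cons n) g = 0 := by
  have hb0 : ∀ t, t < 2 → S4 n t ≠ DnGen.b0 := by
    intro t _; by_cases h : t = 0 <;> simp [S4, h]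
  have hb1 : ∀ t, t < 2 → S4 n t ≠ DnGen.b1 := by
    intro t _; by_cases h : t = 0 <;> simp [S4, h]
  have hc1 : ∀ t, t < 2 → S4 n t ≠ DnGen.c1 := by
    intro t _; by_cases h : t = 0 <;> simp [S4, h]
  have haln : ∀ t, t < 2 → S4 n t ≠ DnGen.al ((n - 3 : ℕ) : Fin (n - 2)) := by
    intro t _; by_cases h : t = 0 <;> simp [S4, h]
    exact fin0_ne n hn
  intro g hg hne
  rcases hg with hg | hg
  · simp only [Set.mem_insert_iff, Set.mem_singleton_iff] at hg
    rcases hg with rfl | rfl | rfl | rfl | rfl | rfl | rfl | rfl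
    · rw [mkRep_π, map_sub, pair0 K n 2 _ _ _ _ (by trivial) (by trivial) hb0,
        pair_manual K n 2 _ _ _ _ (by trivial) (by trivial) ?_, sub_zero]
      rintro t ⟨h1, h2, h3, -⟩
      interval_cases t
      · simp [S4] at h2
      · omega
    · rw [mkRep_π, map_sub, pair0 K n 2 _ _ _ _ (by trivial) (by trivial) hb0,
        down_zero_head K n 2 _ _ hn haln, sub_zero]
    · rw [mkRep_π, pair1 K n 2 _ _ _ _ (by trivial) (by trivial) hb0]
    · exact absurd rfl hne
    · rw [mkRep_π, pair0 K n 2 _ _ _ _ (by trivial) (by trivial) hb1]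
    · rw [mkRep_π, pair0 K n 2 _ _ _ _ (by trivial) (by trivial) hc1]
    · rw [mkRep_π, pair0 K n 2 _ _ _ _ (by trivial) (by trivial) hb1]
    · rw [mkRep_π, pair0 K n 2 _ _ _ _ (by trivial) (by trivial) hc1]
  · obtain ⟨k, hk2, hk3, rfl⟩ := hg
    rw [mkRep_π, x9_zero_len K n 2 _ _ hn k (by omega) (by omega) (by omega)]

theorem R4_nonzero (hn : 4 ≤ n) :
    mkRep K n 2 (S4 n) (S4cons n)
      (Dnπ K n (Dng K (DnGen.al 0) * Dng K DnGen.c0)) ≠ 0 := by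
  rw [mkRep_π, gword_pair]
  apply repHom_gword_ne_zero K n 2 _ _ _ (notE_pair n _ _ (by trivial) (by trivial)) 0
  intro i hi
  have hi2 : i < 2 := by simpa using hi
  interval_cases i <;> simp [S4]

end R34
-- ### down_manual helper

section DownManual

variable (n N : ℕ) [NeZero n] [NeZero (n - 2)] (step : ℕ → DnGen n) (vl : ℕ → Fin n)

theorem down_manual (hn : 4 ≤ n)
    (h : ∀ t, ¬ (t < N ∧ step t = DnGen.al ((n - 3 : ℕ) : Fin (n - 2)) ∧
      t + 1 < N ∧ t + (n - 3) < N)) :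
    repHom K n N step vl (Dnadown K n (n - 2) 1) = 0 := by
  rw [Dnadown_eq, repHom_gword K n N step vl _ (notE_down n _ _)]
  apply condShift_false
  intro t hc
  have h0 := hc 0 (by rw [downList_length]; omega)
  have h1 := hc 1 (by rw [downList_length]; omega)
  have h2 := hc (n - 3) (by rw [downList_length]; omega)
  rw [down_head n hn] at h0
  exact h t ⟨by simpa using h0.1, by simpa using h0.2, h1.1, h2.1⟩

end DownManual

-- ### R5 / R6: walks `β₁ α_{n-2}` and `γ₁ α_{n-2}`, separating `f²₂,₃` and `f²₂,₄`

section R5678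

variable (n : ℕ) [NeZero n] [NeZero (n - 2)]

def S5 : ℕ → DnGen n := fun t => if t = 0 then DnGen.b1 else DnGen.al ((n - 3 : ℕ) : Fin (n - 2))

def S6 : ℕ → DnGen n := fun t => if t = 0 then DnGen.c1 else DnGen.al ((n - 3 : ℕ) : Fin (n - 2))

theorem S5cons (hn : 4 ≤ n) : ∀ t, 1 ≤ t → t < 2 → gtgt n (S5 n (t - 1)) = gsrc n (S5 n t) := by
  intro t h1 h2
  interval_cases t
  show (0 : Fin n) = DnAlSrc n _
  rw [DnAlSrc, if_pos (finCast_val (m := n - 2) (by omega))]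

theorem S6cons (hn : 4 ≤ n) : ∀ t, 1 ≤ t → t < 2 → gtgt n (S6 n (t - 1)) = gsrc n (S6 n t) := by
  intro t h1 h2
  interval_cases t
  show (0 : Fin n) = DnAlSrc n _
  rw [DnAlSrc, if_pos (finCast_val (m := n - 2) (by omega))]

theorem R5_kills (hn : 4 ≤ n) :
    ∀ g ∈ DnF2Set K n,
      g ≠ Dnπ K n (Dng K DnGen.b1 * Dng K (DnGen.al ((n - 3 : ℕ) : Fin (n - 2)))) →
      mkRep K n 2 (S5 n) (S5cons n hn) g = 0 := by
  have hb0 : ∀ t, t < 2 → S5 n t ≠ DnGen.b0 := by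
    intro t _; by_cases h : t = 0 <;> simp [S5, h]
  have hc0 : ∀ t, t < 2 → S5 n t ≠ DnGen.c0 := by
    intro t _; by_cases h : t = 0 <;> simp [S5, h]
  have hc1 : ∀ t, t < 2 → S5 n t ≠ DnGen.c1 := by
    intro t _; by_cases h : t = 0 <;> simp [S5, h]
  have hal0 : ∀ t, t < 2 → S5 n t ≠ DnGen.al 0 := by
    intro t _; by_cases h : t = 0 <;> simp [S5, h]
    exact fun hh => absurd (Nat.le_of_dvd (by omega) hh) (by omega)
  intro g hg hne
  rcases hg with hg | hg
  · simp only [Set.mem_insert_iff, Set.mem_singleton_iff] at hg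
    rcases hg with rfl | rfl | rfl | rfl | rfl | rfl | rfl | rfl
    · rw [mkRep_π, map_sub, pair0 K n 2 _ _ _ _ (by trivial) (by trivial) hb0,
        pair0 K n 2 _ _ _ _ (by trivial) (by trivial) hc0, sub_zero]
    · rw [mkRep_π, map_sub, pair0 K n 2 _ _ _ _ (by trivial) (by trivial) hb0,
        down_manual K n 2 _ _ hn ?_, sub_zero]
      rintro t ⟨h1, h2, h3, -⟩
      interval_cases t
      · simp [S5] at h2
      · omega
    · rw [mkRep_π, pair0 K n 2 _ _ _ _ (by trivial) (by trivial) hal0]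
    · rw [mkRep_π, pair0 K n 2 _ _ _ _ (by trivial) (by trivial) hal0]
    · exact absurd rfl hne
    · rw [mkRep_π, pair0 K n 2 _ _ _ _ (by trivial) (by trivial) hc1]
    · rw [mkRep_π, pair1 K n 2 _ _ _ _ (by trivial) (by trivial) hb0]
    · rw [mkRep_π, pair0 K n 2 _ _ _ _ (by trivial) (by trivial) hc1]
  · obtain ⟨k, hk2, hk3, rfl⟩ := hg
    rw [mkRep_π, x9_zero_len K n 2 _ _ hn k (by omega) (by omega) (by omega)]

theorem R5_nonzero (hn : 4 ≤ n) :
    mkRep K n 2 (S5 n) (S5cons n hn)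
      (Dnπ K n (Dng K DnGen.b1 * Dng K (DnGen.al ((n - 3 : ℕ) : Fin (n - 2))))) ≠ 0 := by
  rw [mkRep_π, gword_pair]
  apply repHom_gword_ne_zero K n 2 _ _ _ (notE_pair n _ _ (by trivial) (by trivial)) 0
  intro i hi
  have hi2 : i < 2 := by simpa using hi
  interval_cases i <;> simp [S5]

theorem R6_kills (hn : 4 ≤ n) :
    ∀ g ∈ DnF2Set K n,
      g ≠ Dnπ K n (Dng K DnGen.c1 * Dng K (DnGen.al ((n - 3 : ℕ) : Fin (n - 2)))) →
      mkRep K n 2 (S6 n) (S6cons n hn) g = 0 := by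
  have hb0 : ∀ t, t < 2 → S6 n t ≠ DnGen.b0 := by
    intro t _; by_cases h : t = 0 <;> simp [S6, h]
  have hb1 : ∀ t, t < 2 → S6 n t ≠ DnGen.b1 := by
    intro t _; by_cases h : t = 0 <;> simp [S6, h]
  have hc0 : ∀ t, t < 2 → S6 n t ≠ DnGen.c0 := by
    intro t _; by_cases h : t = 0 <;> simp [S6, h]
  have hal0 : ∀ t, t < 2 → S6 n t ≠ DnGen.al 0 := by
    intro t _; by_cases h : t = 0 <;> simp [S6, h]
    exact fun hh => absurd (Nat.le_of_dvd (by omega) hh) (by omega)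
  intro g hg hne
  rcases hg with hg | hg
  · simp only [Set.mem_insert_iff, Set.mem_singleton_iff] at hg
    rcases hg with rfl | rfl | rfl | rfl | rfl | rfl | rfl | rfl
    · rw [mkRep_π, map_sub, pair0 K n 2 _ _ _ _ (by trivial) (by trivial) hb0,
        pair0 K n 2 _ _ _ _ (by trivial) (by trivial) hc0, sub_zero]
    · rw [mkRep_π, map_sub, pair0 K n 2 _ _ _ _ (by trivial) (by trivial) hb0,
        down_manual K n 2 _ _ hn ?_, sub_zero]
      rintro t ⟨h1, h2, h3, -⟩
      interval_cases t
      · simp [S6] at h2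
      · omega
    · rw [mkRep_π, pair0 K n 2 _ _ _ _ (by trivial) (by trivial) hal0]
    · rw [mkRep_π, pair0 K n 2 _ _ _ _ (by trivial) (by trivial) hal0]
    · rw [mkRep_π, pair0 K n 2 _ _ _ _ (by trivial) (by trivial) hb1]
    · exact absurd rfl hne
    · rw [mkRep_π, pair0 K n 2 _ _ _ _ (by trivial) (by trivial) hb1]
    · rw [mkRep_π, pair1 K n 2 _ _ _ _ (by trivial) (by trivial) hc0]
  · obtain ⟨k, hk2, hk3, rfl⟩ := hg
    rw [mkRep_π, x9_zero_len K n 2 _ _ hn k (by omega) (by omega) (by omega)]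

theorem R6_nonzero (hn : 4 ≤ n) :
    mkRep K n 2 (S6 n) (S6cons n hn)
      (Dnπ K n (Dng K DnGen.c1 * Dng K (DnGen.al ((n - 3 : ℕ) : Fin (n - 2))))) ≠ 0 := by
  rw [mkRep_π, gword_pair]
  apply repHom_gword_ne_zero K n 2 _ _ _ (notE_pair n _ _ (by trivial) (by trivial)) 0
  intro i hi
  have hi2 : i < 2 := by simpa using hi
  interval_cases i <;> simp [S6]

-- ### R7 / R8: walks `β₁ β₀` and `γ₁ γ₀`, separating `f²₂,₅` and `f²₂,₆`

def S7 : ℕ → DnGen n := fun t => if t = 0 then DnGen.b1 else DnGen.b0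

def S8 : ℕ → DnGen n := fun t => if t = 0 then DnGen.c1 else DnGen.c0

theorem S7cons : ∀ t, 1 ≤ t → t < 2 → gtgt n (S7 n (t - 1)) = gsrc n (S7 n t) := by
  intro t h1 h2
  interval_cases t
  rfl

theorem S8cons : ∀ t, 1 ≤ t → t < 2 → gtgt n (S8 n (t - 1)) = gsrc n (S8 n t) := by
  intro t h1 h2
  interval_cases t
  rfl

theorem R7_kills (hn : 4 ≤ n) :
    ∀ g ∈ DnF2Set K n,
      g ≠ Dnπ K n (Dng K DnGen.b1 * Dng K DnGen.b0) →
      mkRep K n 2 (S7 n) (S7cons n) g = 0 := by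
  have hc0 : ∀ t, t < 2 → S7 n t ≠ DnGen.c0 := by
    intro t _; by_cases h : t = 0 <;> simp [S7, h]
  have hc1 : ∀ t, t < 2 → S7 n t ≠ DnGen.c1 := by
    intro t _; by_cases h : t = 0 <;> simp [S7, h]
  have hal : ∀ (j : Fin (n - 2)) t, t < 2 → S7 n t ≠ DnGen.al j := by
    intro j t _; by_cases h : t = 0 <;> simp [S7, h]
  have hb0b1 : repHom K n 2 (S7 n) (stepVl n (S7 n)) (Dng K DnGen.b0 * Dng K DnGen.b1) = 0 := by
    apply pair_manual K n 2 _ _ _ _ (by trivial) (by trivial)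
    rintro t ⟨h1, h2, h3, -⟩
    interval_cases t
    · simp [S7] at h2
    · omega
  intro g hg hne
  rcases hg with hg | hg
  · simp only [Set.mem_insert_iff, Set.mem_singleton_iff] at hg
    rcases hg with rfl | rfl | rfl | rfl | rfl | rfl | rfl | rfl
    · rw [mkRep_π, map_sub, hb0b1, pair0 K n 2 _ _ _ _ (by trivial) (by trivial) hc0, sub_zero]
    · rw [mkRep_π, map_sub, hb0b1, down_zero_head K n 2 _ _ hn (hal _), sub_zero]
    · rw [mkRep_π, pair0 K n 2 _ _ _ _ (by trivial) (by trivial) (hal _)]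
    · rw [mkRep_π, pair0 K n 2 _ _ _ _ (by trivial) (by trivial) (hal _)]
    · rw [mkRep_π, pair1 K n 2 _ _ _ _ (by trivial) (by trivial) (hal _)]
    · rw [mkRep_π, pair0 K n 2 _ _ _ _ (by trivial) (by trivial) hc1]
    · exact absurd rfl hne
    · rw [mkRep_π, pair0 K n 2 _ _ _ _ (by trivial) (by trivial) hc1]
  · obtain ⟨k, hk2, hk3, rfl⟩ := hg
    rw [mkRep_π, x9_zero_len K n 2 _ _ hn k (by omega) (by omega) (by omega)]

theorem R7_nonzero (hn : 4 ≤ n) :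
    mkRep K n 2 (S7 n) (S7cons n)
      (Dnπ K n (Dng K DnGen.b1 * Dng K DnGen.b0)) ≠ 0 := by
  rw [mkRep_π, gword_pair]
  apply repHom_gword_ne_zero K n 2 _ _ _ (notE_pair n _ _ (by trivial) (by trivial)) 0
  intro i hi
  have hi2 : i < 2 := by simpa using hi
  interval_cases i <;> simp [S7]

theorem R8_kills (hn : 4 ≤ n) :
    ∀ g ∈ DnF2Set K n,
      g ≠ Dnπ K n (Dng K DnGen.c1 * Dng K DnGen.c0) →
      mkRep K n 2 (S8 n) (S8cons n) g = 0 := by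
  have hb0 : ∀ t, t < 2 → S8 n t ≠ DnGen.b0 := by
    intro t _; by_cases h : t = 0 <;> simp [S8, h]
  have hb1 : ∀ t, t < 2 → S8 n t ≠ DnGen.b1 := by
    intro t _; by_cases h : t = 0 <;> simp [S8, h]
  have hal : ∀ (j : Fin (n - 2)) t, t < 2 → S8 n t ≠ DnGen.al j := by
    intro j t _; by_cases h : t = 0 <;> simp [S8, h]
  intro g hg hne
  rcases hg with hg | hg
  · simp only [Set.mem_insert_iff, Set.mem_singleton_iff] at hg
    rcases hg with rfl | rfl | rfl | rfl | rfl | rfl | rfl | rfl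
    · rw [mkRep_π, map_sub, pair0 K n 2 _ _ _ _ (by trivial) (by trivial) hb0,
        pair_manual K n 2 _ _ _ _ (by trivial) (by trivial) ?_, sub_zero]
      rintro t ⟨h1, h2, h3, -⟩
      interval_cases t
      · simp [S8] at h2
      · omega
    · rw [mkRep_π, map_sub, pair0 K n 2 _ _ _ _ (by trivial) (by trivial) hb0,
        down_zero_head K n 2 _ _ hn (hal _), sub_zero]
    · rw [mkRep_π, pair0 K n 2 _ _ _ _ (by trivial) (by trivial) (hal _)]
    · rw [mkRep_π, pair0 K n 2 _ _ _ _ (by trivial) (by trivial) (hal _)]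
    · rw [mkRep_π, pair0 K n 2 _ _ _ _ (by trivial) (by trivial) hb1]
    · rw [mkRep_π, pair1 K n 2 _ _ _ _ (by trivial) (by trivial) (hal _)]
    · rw [mkRep_π, pair0 K n 2 _ _ _ _ (by trivial) (by trivial) hb1]
    · exact absurd rfl hne
  · obtain ⟨k, hk2, hk3, rfl⟩ := hg
    rw [mkRep_π, x9_zero_len K n 2 _ _ hn k (by omega) (by omega) (by omega)]

theorem R8_nonzero (hn : 4 ≤ n) :
    mkRep K n 2 (S8 n) (S8cons n)
      (Dnπ K n (Dng K DnGen.c1 * Dng K DnGen.c0)) ≠ 0 := by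
  rw [mkRep_π, gword_pair]
  apply repHom_gword_ne_zero K n 2 _ _ _ (notE_pair n _ _ (by trivial) (by trivial)) 0
  intro i hi
  have hi2 : i < 2 := by simpa using hi
  interval_cases i <;> simp [S8]

end R5678
-- ### R9: the walk `α_k ⋯ α_1 α_{n-2} ⋯ α_k`, separating `f²₃,ₖ`

section R9

variable (n : ℕ) [NeZero n] [NeZero (n - 2)]

def S9 (k : ℕ) : ℕ → DnGen n :=
  fun t => DnGen.al (((k - 1 : ℕ) : Fin (n - 2)) - ((t : ℕ) : Fin (n - 2)))

theorem S9cons (hn : 4 ≤ n) (k : ℕ) :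
    ∀ t, 1 ≤ t → t < n - 1 → gtgt n (S9 n k (t - 1)) = gsrc n (S9 n k t) := by
  intro t h1 h2
  show DnAlTgt n _ = DnAlSrc n _
  rw [srcEqTgtSucc n hn]
  congr 1
  have hc : ((t : ℕ) : Fin (n - 2)) = ((t - 1 : ℕ) : Fin (n - 2)) + 1 := by
    conv_lhs => rw [show t = (t - 1) + 1 by omega]
    rw [Nat.cast_add_one]
  rw [hc]
  abel

theorem R9_kills (hn : 4 ≤ n) (k : ℕ) (hk2 : 2 ≤ k) (hk3 : k ≤ n - 3) :
    ∀ g ∈ DnF2Set K n,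
      g ≠ Dnπ K n (Dnadown K n k 1 * Dnadown K n (n - 2) k) →
      mkRep K n (n - 1) (S9 n k) (S9cons n hn k) g = 0 := by
  have hb0 : ∀ t, t < n - 1 → S9 n k t ≠ DnGen.b0 := by intro t _; simp [S9]
  have hb1 : ∀ t, t < n - 1 → S9 n k t ≠ DnGen.b1 := by intro t _; simp [S9]
  have hc0 : ∀ t, t < n - 1 → S9 n k t ≠ DnGen.c0 := by intro t _; simp [S9]
  have hc1 : ∀ t, t < n - 1 → S9 n k t ≠ DnGen.c1 := by intro t _; simp [S9]
  intro g hg hne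
  rcases hg with hg | hg
  · simp only [Set.mem_insert_iff, Set.mem_singleton_iff] at hg
    rcases hg with rfl | rfl | rfl | rfl | rfl | rfl | rfl | rfl
    · rw [mkRep_π, map_sub, pair0 K n (n-1) _ _ _ _ (by trivial) (by trivial) hb0,
        pair0 K n (n-1) _ _ _ _ (by trivial) (by trivial) hc0, sub_zero]
    · rw [mkRep_π, map_sub, pair0 K n (n-1) _ _ _ _ (by trivial) (by trivial) hb0,
        down_manual K n (n-1) _ _ hn ?_, sub_zero]
      rintro t ⟨h1, h2, h3, h4⟩
      have ht2 : t < 2 := by omega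
      simp only [S9, DnGen.al.injEq] at h2
      interval_cases t
      · rw [Nat.cast_zero, sub_zero] at h2
        have := finCast_inj (m := n - 2) (a := k - 1) (b := n - 3) (by omega) (by omega) h2
        omega
      · rw [Nat.cast_one, show (1 : Fin (n - 2)) = ((1 : ℕ) : Fin (n - 2)) by
          rw [Nat.cast_one], fin_sub_eq_of_le (by omega) (by omega)] at h2
        have := finCast_inj (m := n - 2) (a := k - 1 - 1) (b := n - 3) (by omega) (by omega) h2
        omega
    · rw [mkRep_π, pair1 K n (n-1) _ _ _ _ (by trivial) (by trivial) hb0]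
    · rw [mkRep_π, pair1 K n (n-1) _ _ _ _ (by trivial) (by trivial) hc0]
    · rw [mkRep_π, pair0 K n (n-1) _ _ _ _ (by trivial) (by trivial) hb1]
    · rw [mkRep_π, pair0 K n (n-1) _ _ _ _ (by trivial) (by trivial) hc1]
    · rw [mkRep_π, pair0 K n (n-1) _ _ _ _ (by trivial) (by trivial) hb1]
    · rw [mkRep_π, pair0 K n (n-1) _ _ _ _ (by trivial) (by trivial) hc1]
  · obtain ⟨k', hk2', hk3', rfl⟩ := hg
    rcases eq_or_ne k' k with rfl | hkk
    · exact absurd rfl hne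
    · rw [mkRep_π, x9_eq_cyc K n hn k' (by omega) (by omega), Dnacyc_eq,
        repHom_gword K n (n-1) _ _ _ (notE_cyc n _ _)]
      apply condShift_false
      intro t hc
      have h0 := hc 0 (by rw [cycList_length]; omega)
      have hlast := hc (n - 2) (by rw [cycList_length]; omega)
      have ht0 : t = 0 := by have := hlast.1; omega
      subst ht0
      have h02 := h0.2
      rw [cycList_get n k' (n - 1) 0 (by omega)] at h02
      simp only [S9, Nat.add_zero, Nat.cast_zero, sub_zero, DnGen.al.injEq] at h02
      have := finCast_inj (m := n - 2) (a := k' - 1) (b := k - 1) (by omega) (by omega) h02.symm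
      exact hkk (by omega)

theorem R9_nonzero (hn : 4 ≤ n) (k : ℕ) (hk2 : 2 ≤ k) (hk3 : k ≤ n - 3) :
    mkRep K n (n - 1) (S9 n k) (S9cons n hn k)
      (Dnπ K n (Dnadown K n k 1 * Dnadown K n (n - 2) k)) ≠ 0 := by
  rw [mkRep_π, x9_eq_cyc K n hn k (by omega) (by omega), Dnacyc_eq]
  apply repHom_gword_ne_zero K n (n-1) _ _ _ (notE_cyc n _ _) 0
  intro i hi
  rw [cycList_length] at hi
  constructor
  · omega
  · rw [cycList_get n k (n - 1) i hi]
    simp [S9]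

end R9
-- ### Section 10: span equality and the main theorem

section Main

variable (n : ℕ) [NeZero n] [NeZero (n - 2)]

theorem myspan_le {R : Type*} [NonUnitalNonAssocRing R] {s : Set R} {I : TwoSidedIdeal R}
    (h : s ⊆ I) : TwoSidedIdeal.span s ≤ I := by
  intro x hx
  exact TwoSidedIdeal.mem_span_iff.mp hx I h

theorem Dnadown_one : Dnadown K n 1 1 = Dng K (DnGen.al 0) := by
  unfold Dnadown
  simp

theorem Dnadown_top (hn : 4 ≤ n) :
    Dnadown K n (n - 2) (n - 2) = Dng K (DnGen.al ((n - 3 : ℕ) : Fin (n - 2))) := by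
  unfold Dnadown
  rw [show n - 2 + 1 - (n - 2) = 1 by omega, show List.range 1 = [0] from rfl]
  simp only [List.map_cons, List.map_nil, List.prod_cons, List.prod_nil, mul_one]
  rw [show n - 2 - 1 - 0 = n - 3 by omega]

theorem span_F2_eq_span_Rel (hn : 4 ≤ n) :
    TwoSidedIdeal.span (DnF2Set K n) = TwoSidedIdeal.span (DnRelSet K n) := by
  apply le_antisymm
  · apply myspan_le
    intro g hg
    rcases hg with hg | hg
    · apply TwoSidedIdeal.subset_span
      left
      simp only [Set.mem_insert_iff, Set.mem_singleton_iff] at hg ⊢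
      tauto
    · obtain ⟨k, hk2, hk3, rfl⟩ := hg
      rw [x9_eq_cyc K n hn k (by omega) (by omega)]
      exact TwoSidedIdeal.subset_span (Or.inr ⟨k, by omega, by omega, rfl⟩)
  · apply myspan_le
    intro g hg
    set I := TwoSidedIdeal.span (DnF2Set K n) with hI
    have mem1 : Dnπ K n (Dng K DnGen.b0 * Dng K DnGen.b1 - Dng K DnGen.c0 * Dng K DnGen.c1)
        ∈ I := TwoSidedIdeal.subset_span (Or.inl (by left; rfl))
    have mem2 : Dnπ K n (Dng K DnGen.b0 * Dng K DnGen.b1 - Dnadown K n (n - 2) 1) ∈ I :=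
      TwoSidedIdeal.subset_span (Or.inl (by right; left; rfl))
    have mem3 : Dnπ K n (Dng K (DnGen.al 0) * Dng K DnGen.b0) ∈ I :=
      TwoSidedIdeal.subset_span (Or.inl (by right; right; left; rfl))
    have mem5 : Dnπ K n (Dng K DnGen.b1 * Dng K (DnGen.al ((n - 3 : ℕ) : Fin (n - 2)))) ∈ I :=
      TwoSidedIdeal.subset_span (Or.inl (by right; right; right; right; left; rfl))
    have mem7 : Dnπ K n (Dng K DnGen.b1 * Dng K DnGen.b0) ∈ I :=
      TwoSidedIdeal.subset_span (Or.inl (by right; right; right; right; right; right; left; rfl))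
    have mem8 : Dnπ K n (Dng K DnGen.c1 * Dng K DnGen.c0) ∈ I :=
      TwoSidedIdeal.subset_span (Or.inl (by right; right; right; right; right; right; right; rfl))
    have mem1' := mem1; have mem2' := mem2; have mem3' := mem3
    have mem5' := mem5; have mem7' := mem7; have mem8' := mem8
    simp only [map_mul, map_sub] at mem1' mem2' mem3' mem5' mem7' mem8'
    rcases hg with hg | hg
    · simp only [Set.mem_insert_iff, Set.mem_singleton_iff] at hg
      rcases hg with rfl | rfl | rfl | rfl | rfl | rfl | rfl | rfl | rfl | rfl | rfl | rfl
      · exact mem1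
      · exact mem2
      · exact TwoSidedIdeal.subset_span (Or.inl (by right; right; left; rfl))
      · exact TwoSidedIdeal.subset_span (Or.inl (by right; right; right; left; rfl))
      · exact mem5
      · exact TwoSidedIdeal.subset_span (Or.inl (by right; right; right; right; right; left; rfl))
      · exact mem7
      · exact mem8
      · -- β₀β₁γ₀ = (β₀β₁ − γ₀γ₁)·γ₀ + γ₀·(γ₁γ₀)
        rw [show (Dng K DnGen.b0 * Dng K DnGen.b1 * Dng K DnGen.c0 : DnFree K n) =
          (Dng K DnGen.b0 * Dng K DnGen.b1 - Dng K DnGen.c0 * Dng K DnGen.c1) * Dng K DnGen.c0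
            + Dng K DnGen.c0 * (Dng K DnGen.c1 * Dng K DnGen.c0) by noncomm_ring]
        simp only [map_add, map_mul, map_sub, map_neg]
        exact I.add_mem (I.mul_mem_right _ _ mem1') (I.mul_mem_left _ _ mem8')
      · -- γ₀γ₁β₀ = −(β₀β₁ − γ₀γ₁)·β₀ + β₀·(β₁β₀)
        rw [show (Dng K DnGen.c0 * Dng K DnGen.c1 * Dng K DnGen.b0 : DnFree K n) =
          -((Dng K DnGen.b0 * Dng K DnGen.b1 - Dng K DnGen.c0 * Dng K DnGen.c1) * Dng K DnGen.b0)
            + Dng K DnGen.b0 * (Dng K DnGen.b1 * Dng K DnGen.b0) by noncomm_ring]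
        simp only [map_add, map_mul, map_sub, map_neg]
        exact I.add_mem (I.neg_mem (I.mul_mem_right _ _ mem1')) (I.mul_mem_left _ _ mem7')
      · -- β₁γ₀γ₁ = −β₁·(β₀β₁ − γ₀γ₁) + (β₁β₀)·β₁
        rw [show (Dng K DnGen.b1 * Dng K DnGen.c0 * Dng K DnGen.c1 : DnFree K n) =
          -(Dng K DnGen.b1 * (Dng K DnGen.b0 * Dng K DnGen.b1 - Dng K DnGen.c0 * Dng K DnGen.c1))
            + (Dng K DnGen.b1 * Dng K DnGen.b0) * Dng K DnGen.b1 by noncomm_ring]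
        simp only [map_add, map_mul, map_sub, map_neg]
        exact I.add_mem (I.neg_mem (I.mul_mem_left _ _ mem1')) (I.mul_mem_right _ _ mem7')
      · -- γ₁β₀β₁ = γ₁·(β₀β₁ − γ₀γ₁) + (γ₁γ₀)·γ₁
        rw [show (Dng K DnGen.c1 * Dng K DnGen.b0 * Dng K DnGen.b1 : DnFree K n) =
          Dng K DnGen.c1 * (Dng K DnGen.b0 * Dng K DnGen.b1 - Dng K DnGen.c0 * Dng K DnGen.c1)
            + (Dng K DnGen.c1 * Dng K DnGen.c0) * Dng K DnGen.c1 by noncomm_ring]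
        simp only [map_add, map_mul, map_sub, map_neg]
        exact I.add_mem (I.mul_mem_left _ _ mem1') (I.mul_mem_right _ _ mem8')
    · obtain ⟨j, hj1, hj2, rfl⟩ := hg
      rcases Nat.lt_or_ge j 2 with hj | hj
      · -- j = 1
        have hj' : j = 1 := by omega
        subst hj'
        rw [← x9_eq_cyc K n hn 1 (by omega) (by omega), Dnadown_one]
        rw [show (Dng K (DnGen.al 0) * Dnadown K n (n - 2) 1 : DnFree K n) =
          -(Dng K (DnGen.al 0) * (Dng K DnGen.b0 * Dng K DnGen.b1 - Dnadown K n (n - 2) 1))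
            + (Dng K (DnGen.al 0) * Dng K DnGen.b0) * Dng K DnGen.b1 by noncomm_ring]
        simp only [map_add, map_mul, map_sub, map_neg]
        exact I.add_mem (I.neg_mem (I.mul_mem_left _ _ mem2')) (I.mul_mem_right _ _ mem3')
      · rcases Nat.lt_or_ge (n - 3) j with hj' | hj'
        · -- j = n − 2
          have hj'' : j = n - 2 := by omega
          subst hj''
          rw [← x9_eq_cyc K n hn (n - 2) (by omega) (by omega), Dnadown_top K n hn]
          rw [show (Dnadown K n (n - 2) 1 * Dng K (DnGen.al ((n - 3 : ℕ) : Fin (n - 2)))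
              : DnFree K n) =
            -((Dng K DnGen.b0 * Dng K DnGen.b1 - Dnadown K n (n - 2) 1)
                * Dng K (DnGen.al ((n - 3 : ℕ) : Fin (n - 2))))
              + Dng K DnGen.b0
                * (Dng K DnGen.b1 * Dng K (DnGen.al ((n - 3 : ℕ) : Fin (n - 2)))) by noncomm_ring]
          simp only [map_add, map_mul, map_sub, map_neg]
          exact I.add_mem (I.neg_mem (I.mul_mem_right _ _ mem2')) (I.mul_mem_left _ _ mem5')
        · -- 2 ≤ j ≤ n − 3
          rw [← x9_eq_cyc K n hn j (by omega) (by omega)]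
          exact TwoSidedIdeal.subset_span (Or.inr ⟨j, hj, hj', rfl⟩)

end Main
/-- For any field `K` and `n ≥ 4`, the set `f²` of Proposition 5.3
is a minimal generating set for the defining ideal `I` of `Λ(D_n, 1, 2)` inside the
path algebra `KQ`: it generates the two-sided ideal generated by the relations
`R(D_n, 1, 2)`, and no proper subset of `f²` generates it. -/
theorem f2_minimal_generating_Dn (K : Type) [Field K]
    (n : ℕ) [NeZero n] [NeZero (n - 2)] (hn : 4 ≤ n) :
    TwoSidedIdeal.span (DnF2Set K n) = TwoSidedIdeal.span (DnRelSet K n) ∧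
    ∀ S : Set (DnPathAlg K n), S ⊆ DnF2Set K n →
      TwoSidedIdeal.span S = TwoSidedIdeal.span (DnRelSet K n) → S = DnF2Set K n := by
  constructor
  · exact span_F2_eq_span_Rel K n hn
  · intro S hS hspan
    apply Set.Subset.antisymm hS
    intro f hf
    by_contra hfS
    have hfmem : f ∈ TwoSidedIdeal.span S := by
      rw [hspan, ← span_F2_eq_span_Rel K n hn]
      exact TwoSidedIdeal.subset_span hf
    have key : ∀ (N : ℕ) (step : ℕ → DnGen n)
        (hcons : ∀ t, 1 ≤ t → t < N → gtgt n (step (t - 1)) = gsrc n (step t)),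
        (∀ g ∈ DnF2Set K n, g ≠ f → mkRep K n N step hcons g = 0) →
        mkRep K n N step hcons f = 0 := by
      intro N step hcons hkills
      have hS0 : ∀ g ∈ S, mkRep K n N step hcons g = 0 := fun g hg =>
        hkills g (hS hg) (fun he => hfS (he ▸ hg))
      have hmem : f ∈ TwoSidedIdeal.ker (mkRep K n N step hcons) :=
        TwoSidedIdeal.mem_span_iff.mp hfmem _
          (fun g hg => (TwoSidedIdeal.mem_ker _).mpr (hS0 g hg))
      exact (TwoSidedIdeal.mem_ker _).mp hmem
    rcases hf with hf | hf
    · simp only [Set.mem_insert_iff, Set.mem_singleton_iff] at hf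
      rcases hf with rfl | rfl | rfl | rfl | rfl | rfl | rfl | rfl
      · exact R1_nonzero K n hn (key 2 (S1 n) (S1cons n) (R1_kills K n hn))
      · exact R2_nonzero K n hn (key (n - 2) (S2 n) (S2cons n hn) (R2_kills K n hn))
      · exact R3_nonzero K n hn (key 2 (S3 n) (S3cons n) (R3_kills K n hn))
      · exact R4_nonzero K n hn (key 2 (S4 n) (S4cons n) (R4_kills K n hn))
      · exact R5_nonzero K n hn (key 2 (S5 n) (S5cons n hn) (R5_kills K n hn))
      · exact R6_nonzero K n hn (key 2 (S6 n) (S6cons n hn) (R6_kills K n hn))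
      · exact R7_nonzero K n hn (key 2 (S7 n) (S7cons n) (R7_kills K n hn))
      · exact R8_nonzero K n hn (key 2 (S8 n) (S8cons n) (R8_kills K n hn))
    · obtain ⟨k, hk2, hk3, rfl⟩ := hf
      exact R9_nonzero K n hn k hk2 hk3
        (key (n - 1) (S9 n k) (S9cons n hn k) (R9_kills K n hn k hk2 hk3))
end
end

section
/- Let K be a field, m ≥ 3, and let Λ = KQ/I where Q has vertices 1,…,m, a loop β at vertex 1, arrows α_i: i → i+1 (mod m), and I is generated by β² − α₁⋯α_m, α_mα₁, and α_j⋯α_mβα₁⋯α_j for 2 ≤ j ≤ m−1 (the standard algebra Λ(D_{3m},1/3,1)). Then the set {e₁, β, β², β³} is linearly independent in e₁Λe₁, and β⁴ = 0 in Λ. -/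
noncomputable section

/-! ### The quiver of type `(D_{3m}, 1/3)`: vertices `1, …, m` (indexed by `Fin m`,
vertex `i+1` ↦ index `i`), a loop `β` at vertex `1`, and arrows `αᵢ : i → i+1` (mod `m`,
arrow `α_{i+1}` ↦ index `i`). -/

/-- Generators: idempotents `e i` for the vertices, arrows `a i` (the arrow
`α_{i+1} : i+1 → i+2 (mod m)`) and the loop `b` (the loop `β` at vertex `1`). -/
inductive DGen (m : ℕ) : Type
  | e (i : Fin m) : DGen m
  | a (i : Fin m) : DGen m
  | b : DGen m

variable (K : Type) [Field K]

/-- The free algebra on the generators. -/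
abbrev DFree (m : ℕ) : Type := FreeAlgebra K (DGen m)

/-- Generator as element of the free algebra. -/
abbrev Dg {m : ℕ} (g : DGen m) : DFree K m := FreeAlgebra.ι K g

open Fin.NatCast in
/-- The path `α_{j+1} α_{j+2} ⋯` of `len` arrows starting with arrow index `j` (cyclically). -/
def Dapath (m : ℕ) [NeZero m] (j len : ℕ) : DFree K m :=
  ((List.range len).map (fun t => Dg K (DGen.a ((j + t : ℕ) : Fin m)))).prod

/-- Relations presenting the path algebra structure of the quiver `Q(D_{3m}, 1/3)`:
the vertex idempotents are orthogonal, sum to `1`, and each arrow is supported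
at its source and target. -/
inductive DQuivRel (m : ℕ) [NeZero m] : DFree K m → DFree K m → Prop
  | idem (i j : Fin m) :
      DQuivRel m (Dg K (DGen.e i) * Dg K (DGen.e j)) (if i = j then Dg K (DGen.e i) else 0)
  | vsum : DQuivRel m (∑ i : Fin m, Dg K (DGen.e i)) 1
  | asrc (i : Fin m) : DQuivRel m (Dg K (DGen.e i) * Dg K (DGen.a i)) (Dg K (DGen.a i))
  | atgt (i : Fin m) : DQuivRel m (Dg K (DGen.a i) * Dg K (DGen.e (i + 1))) (Dg K (DGen.a i))
  | bsrc : DQuivRel m (Dg K (DGen.e 0) * Dg K DGen.b) (Dg K DGen.b)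
  | btgt : DQuivRel m (Dg K DGen.b * Dg K (DGen.e 0)) (Dg K DGen.b)

open Fin.NatCast in
/-- The relations of the standard algebra `Λ(D_{3m}, 1/3, 1)` (for `s = 1`):
`α₁α₂⋯α_m = β²`, `α_mα₁ = 0`, and `α_j⋯α_mβα₁⋯α_j = 0` for `2 ≤ j ≤ m−1`,
together with the path algebra relations of the quiver. -/
inductive DStdRel (m : ℕ) [NeZero m] : DFree K m → DFree K m → Prop
  | quiv {x y : DFree K m} : DQuivRel K m x y → DStdRel m x y
  | r1 : DStdRel m (Dapath K m 0 m) (Dg K DGen.b * Dg K DGen.b)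
  | r2 : DStdRel m (Dg K (DGen.a ((m - 1 : ℕ) : Fin m)) * Dg K (DGen.a 0)) 0
  | r3 (j : ℕ) (h1 : 2 ≤ j) (h2 : j ≤ m - 1) :
      DStdRel m (Dapath K m (j - 1) (m - (j - 1)) * Dg K DGen.b * Dapath K m 0 j) 0

open Fin.NatCast in
/-- The relations of the non-standard algebra `Λ(m)`:
`α₁α₂⋯α_m = β²`, `α_mα₁ = α_mβα₁`, and all `α`-paths of length `m+1` are zero,
together with the path algebra relations of the quiver. -/
inductive DNSRel (m : ℕ) [NeZero m] : DFree K m → DFree K m → Prop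
  | quiv {x y : DFree K m} : DQuivRel K m x y → DNSRel m x y
  | r1 : DNSRel m (Dapath K m 0 m) (Dg K DGen.b * Dg K DGen.b)
  | r2 : DNSRel m (Dg K (DGen.a ((m - 1 : ℕ) : Fin m)) * Dg K (DGen.a 0))
      (Dg K (DGen.a ((m - 1 : ℕ) : Fin m)) * Dg K DGen.b * Dg K (DGen.a 0))
  | r3 (i : Fin m) : DNSRel m (Dapath K m i (m + 1)) 0

/-- The standard algebra `Λ(D_{3m}, 1/3, 1)`. -/
abbrev DStdAlg (m : ℕ) [NeZero m] : Type := RingQuot (DStdRel K m)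

/-- The non-standard algebra `Λ(m)`. -/
abbrev DNSAlg (m : ℕ) [NeZero m] : Type := RingQuot (DNSRel K m)

namespace D9

open Fin.NatCast

inductive St (m : ℕ) : Type
  | p0 | p1 | p2 | p3
  | q (j : Fin m) : St m
  | r (j : Fin m) : St m
  deriving DecidableEq, Fintype

set_option linter.unusedSectionVars false

variable {m : ℕ} [NeZero m]

def vtx : St m → Fin m
  | .q j => j
  | .r j => j
  | _ => 0

def acte (i : Fin m) : St m → Option (St m) := fun s => if vtx s = i then some s else none

def actb : St m → Option (St m)
  | .p0 => some .p1
  | .p1 => some .p2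
  | .p2 => some .p3
  | _ => none

def acta (i : Fin m) : St m → Option (St m)
  | .p0 => if i = 0 then some (.q 1) else none
  | .p1 => if i = 0 then some (.r 1) else none
  | .q j =>
      if i = j ∧ j ≠ 0 then
        (if (j : ℕ) = m - 1 then some .p2 else some (.q (j + 1))) else none
  | .r j =>
      if i = j ∧ j ≠ 0 then
        (if (j : ℕ) = m - 1 then some .p3 else some (.r (j + 1))) else none
  | _ => none

def act : DGen m → St m → Option (St m)
  | .e i => acte i
  | .a i => acta i
  | .b => actb

def M (f : St m → Option (St m)) : Matrix (St m) (St m) K :=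
  Matrix.of fun s t => if f s = some t then 1 else 0

theorem M_mul (f g : St m → Option (St m)) :
    M K f * M K g = M K (fun s => (f s).bind g) := by
  ext s t
  rw [Matrix.mul_apply]
  cases h : f s with
  | none => simp [M, h]
  | some k =>
    simp only [M, Matrix.of_apply, h, Option.bind_some]
    rw [Finset.sum_eq_single k]
    · simp
    · intro b _ hb
      simp [Ne.symm hb]
    · simp

theorem M_zero : M (m := m) K (fun _ => none) = 0 := by
  ext s t; simp [M]

theorem M_one : M (m := m) K some = 1 := by
  ext s t
  simp [M, Matrix.one_apply, eq_comm]

def apath (j : ℕ) : ℕ → St m → Option (St m)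
  | 0 => some
  | (len + 1) => fun s => (acta ((j : Fin m)) s).bind (apath (j + 1) len)

def phi (m : ℕ) [NeZero m] : DFree K m →ₐ[K] Matrix (St m) (St m) K :=
  FreeAlgebra.lift K (fun g => M K (act g))

@[simp] theorem phi_Dg (g : DGen m) : phi K m (Dg K g) = M K (act g) :=
  FreeAlgebra.lift_ι_apply _ _

theorem Dapath_cons (j len : ℕ) :
    Dapath K m j (len + 1) = Dg K (DGen.a (j : Fin m)) * Dapath K m (j + 1) len := by
  unfold Dapath
  rw [List.range_succ_eq_map, List.map_cons, List.prod_cons, List.map_map]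
  rw [Nat.add_zero]
  congr 1
  have hf : ((fun t => Dg K (DGen.a ((j + t : ℕ) : Fin m))) ∘ Nat.succ)
      = fun t => Dg K (DGen.a ((j + 1 + t : ℕ) : Fin m)) := by
    funext t
    simp only [Function.comp_apply]
    congr 3
    omega
  rw [hf]

theorem Dapath_snoc (j len : ℕ) :
    Dapath K m j (len + 1) = Dapath K m j len * Dg K (DGen.a ((j + len : ℕ) : Fin m)) := by
  unfold Dapath
  rw [List.range_succ, List.map_append, List.prod_append]
  simp

theorem phi_Dapath (j len : ℕ) : phi K m (Dapath K m j len) = M K (apath j len) := by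
  induction len generalizing j with
  | zero =>
    show phi K m 1 = _
    rw [map_one, apath, M_one]
  | succ n ih =>
    rw [Dapath_cons, map_mul, phi_Dg, ih]
    show _ = M K (apath j (n + 1))
    rw [apath, ← M_mul]
    rfl

/-! ### evaluation lemmas -/

theorem cast_ne_zero {j : ℕ} (h1 : 1 ≤ j) (h2 : j < m) : ((j : ℕ) : Fin m) ≠ 0 := by
  intro h
  have hv : (((j : ℕ) : Fin m) : ℕ) = j := Fin.val_cast_of_lt h2
  rw [h] at hv
  simp at hv
  omega

theorem apath_q (len : ℕ) : ∀ j, 1 ≤ j → j < m → j + len = m →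
    apath (m := m) j len (.q ((j : ℕ) : Fin m)) = some .p2 := by
  induction len with
  | zero => intro j h1 h2 h3; omega
  | succ n ih =>
    intro j h1 h2 h3
    have hv : (((j : ℕ) : Fin m) : ℕ) = j := Fin.val_cast_of_lt h2
    have hne : ((j : ℕ) : Fin m) ≠ 0 := cast_ne_zero h1 h2
    show (acta ((j : Fin m)) (.q ((j : ℕ) : Fin m))).bind (apath (j + 1) n) = _
    rw [acta, if_pos ⟨rfl, hne⟩, hv]
    by_cases hj : j = m - 1
    · rw [if_pos hj]
      have hn0 : n = 0 := by omega
      subst hn0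
      rfl
    · rw [if_neg hj, Option.bind_some]
      have hcast : ((j : ℕ) : Fin m) + 1 = (((j + 1 : ℕ)) : Fin m) := by push_cast; ring
      rw [hcast]
      exact ih (j + 1) (by omega) (by omega) (by omega)

theorem apath_r (len : ℕ) : ∀ j, 1 ≤ j → j < m → j + len = m →
    apath (m := m) j len (.r ((j : ℕ) : Fin m)) = some .p3 := by
  induction len with
  | zero => intro j h1 h2 h3; omega
  | succ n ih =>
    intro j h1 h2 h3
    have hv : (((j : ℕ) : Fin m) : ℕ) = j := Fin.val_cast_of_lt h2
    have hne : ((j : ℕ) : Fin m) ≠ 0 := cast_ne_zero h1 h2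
    show (acta ((j : Fin m)) (.r ((j : ℕ) : Fin m))).bind (apath (j + 1) n) = _
    rw [acta, if_pos ⟨rfl, hne⟩, hv]
    by_cases hj : j = m - 1
    · rw [if_pos hj]
      have hn0 : n = 0 := by omega
      subst hn0
      rfl
    · rw [if_neg hj, Option.bind_some]
      have hcast : ((j : ℕ) : Fin m) + 1 = (((j + 1 : ℕ)) : Fin m) := by push_cast; ring
      rw [hcast]
      exact ih (j + 1) (by omega) (by omega) (by omega)

theorem apath_step_none (j len : ℕ) (s : St m) (h : acta ((j : ℕ) : Fin m) s = none) :
    apath j (len + 1) s = none := by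
  show (acta ((j : Fin m)) s).bind _ = none
  rw [h]
  rfl

theorem apath_full (j : ℕ) (h1 : 1 ≤ j) (h2 : j < m) (s : St m) :
    apath (m := m) j (m - j) s =
      if s = .q ((j : ℕ) : Fin m) then some .p2
      else if s = .r ((j : ℕ) : Fin m) then some .p3 else none := by
  obtain ⟨n, hn⟩ : ∃ n, m - j = n + 1 := ⟨m - j - 1, by omega⟩
  have hne : ((j : ℕ) : Fin m) ≠ 0 := cast_ne_zero h1 h2
  by_cases hq : s = St.q ((j : ℕ) : Fin m)
  · rw [if_pos hq, hq]
    exact apath_q _ j h1 h2 (by omega)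
  · rw [if_neg hq]
    by_cases hr : s = St.r ((j : ℕ) : Fin m)
    · rw [if_pos hr, hr]
      exact apath_r _ j h1 h2 (by omega)
    · rw [if_neg hr, hn]
      apply apath_step_none
      cases s with
      | q j' =>
        have : ¬(((j : ℕ) : Fin m) = j') := fun h => hq (by rw [h])
        simp [acta, this]
      | r j' =>
        have : ¬(((j : ℕ) : Fin m) = j') := fun h => hr (by rw [h])
        simp [acta, this]
      | p0 => simp [acta, hne]
      | p1 => simp [acta, hne]
      | p2 => simp [acta]
      | p3 => simp [acta]

theorem apath_zm (hm : 3 ≤ m) (s : St m) :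
    apath (m := m) 0 m s = (actb s).bind actb := by
  obtain ⟨n, hn⟩ : ∃ n, m = n + 1 := ⟨m - 1, by omega⟩
  have hstep : apath (m := m) 0 m = apath (m := m) 0 (n + 1) := by
    exact congrArg (apath (m := m) 0) hn
  rw [hstep]
  show (acta (((0 : ℕ) : Fin m)) s).bind (apath 1 n) = _
  rw [Nat.cast_zero]
  cases s with
  | p0 =>
    rw [acta, if_pos rfl, Option.bind_some]
    rw [show (1 : Fin m) = ((1 : ℕ) : Fin m) by rw [Nat.cast_one]]
    rw [apath_q n 1 le_rfl (by omega) (by omega)]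
    rfl
  | p1 =>
    rw [acta, if_pos rfl, Option.bind_some]
    rw [show (1 : Fin m) = ((1 : ℕ) : Fin m) by rw [Nat.cast_one]]
    rw [apath_r n 1 le_rfl (by omega) (by omega)]
    rfl
  | p2 => rfl
  | p3 => rfl
  | q j =>
    have : ¬((0 : Fin m) = j ∧ j ≠ 0) := by
      rintro ⟨h, h2⟩; exact h2 h.symm
    rw [acta, if_neg this]
    rfl
  | r j =>
    have : ¬((0 : Fin m) = j ∧ j ≠ 0) := by
      rintro ⟨h, h2⟩; exact h2 h.symm
    rw [acta, if_neg this]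
    rfl


/-! ### quiver relation helpers -/

theorem acta_vtx_ne {i : Fin m} {s : St m} (h : vtx s ≠ i) : acta i s = none := by
  cases s with
  | p0 => simp [acta, (Ne.symm h : i ≠ 0)]
  | p1 => simp [acta, (Ne.symm h : i ≠ 0)]
  | p2 => rfl
  | p3 => rfl
  | q j => simp [acta, (Ne.symm h : i ≠ j)]
  | r j => simp [acta, (Ne.symm h : i ≠ j)]

theorem actb_vtx_ne {s : St m} (h : vtx s ≠ 0) : actb s = none := by
  cases s with
  | p0 => exact absurd rfl h
  | p1 => exact absurd rfl h
  | p2 => exact absurd rfl h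
  | p3 => exact absurd rfl h
  | q j => rfl
  | r j => rfl

theorem fin_succ_last {j : Fin m} (hj : (j : ℕ) = m - 1) : j + 1 = 0 := by
  have hm : 0 < m := Nat.pos_of_ne_zero (NeZero.ne m)
  have hjv : j = ((m - 1 : ℕ) : Fin m) := by
    apply Fin.ext
    rw [Fin.val_cast_of_lt (by omega), hj]
  rw [hjv, show ((m - 1 : ℕ) : Fin m) + 1 = ((m - 1 + 1 : ℕ) : Fin m) by push_cast; ring,
    show m - 1 + 1 = m by omega]
  exact Fin.natCast_self m

theorem quiv_preserved (x y : DFree K m) (h : DQuivRel K m x y) : phi K m x = phi K m y := by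
  cases h with
  | idem i j =>
    rw [map_mul, phi_Dg, phi_Dg, show act (DGen.e i) = acte i from rfl,
      show act (DGen.e j) = acte j from rfl, M_mul]
    by_cases hij : i = j
    · subst hij
      rw [if_pos rfl, phi_Dg]
      show _ = M K (acte i)
      refine congrArg (M K) (funext fun s => ?_)
      by_cases hv : vtx s = i <;> simp [acte, hv]
    · rw [if_neg hij, map_zero, ← M_zero]
      refine congrArg (M K) (funext fun s => ?_)
      by_cases hv : vtx s = i <;> simp [acte, hv, hij]
  | vsum =>
    rw [map_sum, map_one]
    simp only [phi_Dg]
    show (∑ i : Fin m, M K (acte i)) = 1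
    ext s t
    rw [Matrix.sum_apply]
    simp only [M, acte, Matrix.of_apply, Matrix.one_apply]
    rw [Finset.sum_eq_single (vtx s)]
    · simp
    · intro i _ hne
      simp [Ne.symm hne]
    · simp
  | asrc i =>
    rw [map_mul, phi_Dg, phi_Dg, show act (DGen.e i) = acte i from rfl,
      show act (DGen.a i) = acta i from rfl, M_mul]
    refine congrArg (M K) (funext fun s => ?_)
    by_cases hv : vtx s = i
    · simp [acte, hv]
    · simp [acte, hv, acta_vtx_ne hv]
  | atgt i =>
    rw [map_mul, phi_Dg, phi_Dg, show act (DGen.e (i+1)) = acte (i+1) from rfl,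
      show act (DGen.a i) = acta i from rfl, M_mul]
    refine congrArg (M K) (funext fun s => ?_)
    cases s with
    | p0 =>
      by_cases hi : i = 0
      · subst hi
        simp [acta, acte, vtx, zero_add]
      · simp [acta, hi]
    | p1 =>
      by_cases hi : i = 0
      · subst hi
        simp [acta, acte, vtx, zero_add]
      · simp [acta, hi]
    | p2 => rfl
    | p3 => rfl
    | q j =>
      by_cases hij : i = j ∧ j ≠ 0
      · obtain ⟨rfl, hj0⟩ := hij
        by_cases hjm : (i : ℕ) = m - 1
        · have h0 : i + 1 = 0 := fin_succ_last hjm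
          simp [acta, hjm, hj0, acte, vtx, h0]
        · simp [acta, hjm, hj0, acte, vtx]
      · simp [acta, hij]
    | r j =>
      by_cases hij : i = j ∧ j ≠ 0
      · obtain ⟨rfl, hj0⟩ := hij
        by_cases hjm : (i : ℕ) = m - 1
        · have h0 : i + 1 = 0 := fin_succ_last hjm
          simp [acta, hjm, hj0, acte, vtx, h0]
        · simp [acta, hjm, hj0, acte, vtx]
      · simp [acta, hij]
  | bsrc =>
    rw [map_mul, phi_Dg, phi_Dg, show act (DGen.e 0) = acte 0 from rfl,
      show act DGen.b = actb from rfl, M_mul]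
    refine congrArg (M K) (funext fun s => ?_)
    by_cases hv : vtx s = 0
    · simp [acte, hv]
    · simp [acte, hv, actb_vtx_ne hv]
  | btgt =>
    rw [map_mul, phi_Dg, phi_Dg, show act (DGen.e 0) = acte 0 from rfl,
      show act DGen.b = actb from rfl, M_mul]
    refine congrArg (M K) (funext fun s => ?_)
    cases s with
    | p0 => simp [actb, acte, vtx]
    | p1 => simp [actb, acte, vtx]
    | p2 => simp [actb, acte, vtx]
    | p3 => rfl
    | q j => rfl
    | r j => rfl


theorem r2fun (hm : 3 ≤ m) (s : St m) :
    (acta (((m - 1 : ℕ) : Fin m)) s).bind (acta (0 : Fin m)) = none := by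
  have hv : ((((m - 1 : ℕ)) : Fin m) : ℕ) = m - 1 := Fin.val_cast_of_lt (by omega)
  have hne : (((m - 1 : ℕ)) : Fin m) ≠ 0 := cast_ne_zero (by omega) (by omega)
  cases s with
  | p0 => simp [acta, hne]
  | p1 => simp [acta, hne]
  | p2 => rfl
  | p3 => rfl
  | q j =>
    by_cases hj : ((m - 1 : ℕ) : Fin m) = j ∧ j ≠ 0
    · have hjv : (j : ℕ) = m - 1 := by rw [← hj.1, hv]
      have hz : acta (0 : Fin m) St.p2 = none := rfl
      simp [acta, hj.1, hj.2, hjv, hz]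
    · simp [acta, hj]
  | r j =>
    by_cases hj : ((m - 1 : ℕ) : Fin m) = j ∧ j ≠ 0
    · have hjv : (j : ℕ) = m - 1 := by rw [← hj.1, hv]
      have hz : acta (0 : Fin m) St.p3 = none := rfl
      simp [acta, hj.1, hj.2, hjv, hz]
    · simp [acta, hj]

theorem r3fun (hm : 3 ≤ m) (j : ℕ) (h1 : 2 ≤ j) (h2 : j ≤ m - 1) (s : St m) :
    ((apath (j - 1) (m - (j - 1)) s).bind actb).bind (apath (m := m) 0 j) = none := by
  rw [apath_full (j - 1) (by omega) (by omega) s]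
  by_cases hq : s = St.q (((j - 1 : ℕ)) : Fin m)
  · rw [if_pos hq]
    show apath (m := m) 0 j St.p3 = none
    obtain ⟨n, hn⟩ : ∃ n, j = n + 1 := ⟨j - 1, by omega⟩
    rw [hn]
    exact apath_step_none 0 n _ rfl
  · rw [if_neg hq]
    by_cases hr : s = St.r (((j - 1 : ℕ)) : Fin m)
    · rw [if_pos hr]
      rfl
    · rw [if_neg hr]
      rfl

theorem preserve (hm : 3 ≤ m) : ∀ ⦃x y : DFree K m⦄, DStdRel K m x y →
    phi K m x = phi K m y := by
  intro x y h
  cases h with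
  | quiv h => exact quiv_preserved K _ _ h
  | r1 =>
    rw [phi_Dapath, map_mul, phi_Dg, show act DGen.b = actb from rfl, M_mul]
    exact congrArg (M K) (funext fun s => apath_zm hm s)
  | r2 =>
    rw [map_mul, phi_Dg, phi_Dg, map_zero,
      show act (DGen.a (((m - 1 : ℕ)) : Fin m)) = acta (((m - 1 : ℕ)) : Fin m) from rfl,
      show act (DGen.a 0) = acta 0 from rfl, M_mul, ← M_zero]
    exact congrArg (M K) (funext fun s => r2fun hm s)
  | r3 j h1 h2 =>
    rw [map_mul, map_mul, phi_Dapath, phi_Dg, phi_Dapath, map_zero,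
      show act DGen.b = actb from rfl, M_mul, M_mul, ← M_zero]
    exact congrArg (M K) (funext fun s => r3fun hm j h1 h2 s)

theorem indep4 (hm : 3 ≤ m) :
    LinearIndependent K ![M K (acte (0 : Fin m)), M K actb, M K actb ^ 2, M K actb ^ 3] := by
  have h2 : M (m := m) K actb ^ 2 = M K (fun s => (actb s).bind actb) := by
    rw [pow_two, M_mul]
  have h3 : M (m := m) K actb ^ 3 = M K (fun s => ((actb s).bind actb).bind actb) := by
    rw [pow_succ, h2, M_mul]
  rw [Fintype.linearIndependent_iff]
  intro g hg
  rw [Fin.sum_univ_four] at hg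
  simp only [Matrix.cons_val_zero, Matrix.cons_val_one, Matrix.head_cons,
    Matrix.cons_val_two, Matrix.tail_cons, Matrix.cons_val_three] at hg
  rw [h2, h3] at hg
  have key : ∀ t : St m,
      g 0 * (M K (acte (0 : Fin m))) St.p0 t + g 1 * (M K actb) St.p0 t
        + g 2 * (M K (fun s => (actb s).bind actb)) St.p0 t
        + g 3 * (M K (fun s => ((actb s).bind actb).bind actb)) St.p0 t = 0 := by
    intro t
    have := congrFun (congrFun hg St.p0) t
    simpa [Matrix.add_apply, Matrix.smul_apply, smul_eq_mul] using this
  have e0 := key St.p0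
  have e1 := key St.p1
  have e2 := key St.p2
  have e3 := key St.p3
  simp only [M, acte, actb, vtx, Matrix.of_apply, Option.bind_some] at e0 e1 e2 e3
  simp at e0 e1 e2 e3
  intro i
  fin_cases i
  · exact e0
  · exact e1
  · exact e2
  · exact e3

end D9

open Fin.NatCast in
/-- In the standard algebra `Λ = Λ(D_{3m}, 1/3, 1)` with `m ≥ 3`
(over any field `K`), the set `{e₁, β, β², β³}` is linearly independent in `e₁Λe₁`,
and `β⁴ = 0` in `Λ`. -/
theorem beta_powers_std_D3m (K : Type) [Field K] (m : ℕ) [NeZero m] (hm : 3 ≤ m)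
    (e1 β : DStdAlg K m)
    (he1 : e1 = RingQuot.mkAlgHom K (DStdRel K m) (Dg K (DGen.e 0)))
    (hβ : β = RingQuot.mkAlgHom K (DStdRel K m) (Dg K DGen.b)) :
    LinearIndependent K ![e1, β, β ^ 2, β ^ 3] ∧ β ^ 4 = 0 := by
  subst he1 hβ
  obtain ⟨n, rfl⟩ : ∃ n, m = n + 1 := ⟨m - 1, by omega⟩
  constructor
  · let Φ : DStdAlg K (n + 1) →ₐ[K] Matrix (D9.St (n + 1)) (D9.St (n + 1)) K :=
      RingQuot.liftAlgHom K ⟨D9.phi K (n + 1), fun x y h => D9.preserve K hm h⟩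
    apply LinearIndependent.of_comp Φ.toLinearMap
    have h1 : Φ (RingQuot.mkAlgHom K (DStdRel K (n + 1)) (Dg K (DGen.e 0)))
        = D9.M K (D9.acte 0) := by
      show RingQuot.liftAlgHom K ⟨_, _⟩ _ = _
      rw [RingQuot.liftAlgHom_mkAlgHom_apply]
      exact D9.phi_Dg K (DGen.e 0)
    have h2 : Φ (RingQuot.mkAlgHom K (DStdRel K (n + 1)) (Dg K DGen.b))
        = D9.M K D9.actb := by
      show RingQuot.liftAlgHom K ⟨_, _⟩ _ = _
      rw [RingQuot.liftAlgHom_mkAlgHom_apply]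
      exact D9.phi_Dg K DGen.b
    have hc : Φ.toLinearMap ∘ ![RingQuot.mkAlgHom K (DStdRel K (n + 1)) (Dg K (DGen.e 0)),
        RingQuot.mkAlgHom K (DStdRel K (n + 1)) (Dg K DGen.b),
        RingQuot.mkAlgHom K (DStdRel K (n + 1)) (Dg K DGen.b) ^ 2,
        RingQuot.mkAlgHom K (DStdRel K (n + 1)) (Dg K DGen.b) ^ 3]
        = ![D9.M K (D9.acte 0), D9.M K D9.actb, D9.M K D9.actb ^ 2, D9.M K D9.actb ^ 3] := by
      funext i
      fin_cases i <;> simp [Function.comp, map_pow, h1, h2]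
    rw [hc]
    exact D9.indep4 K hm
  · have hb2 : RingQuot.mkAlgHom K (DStdRel K (n + 1)) (Dg K DGen.b) ^ 2
        = RingQuot.mkAlgHom K (DStdRel K (n + 1)) (Dapath K (n + 1) 0 (n + 1)) := by
      rw [pow_two, ← map_mul]
      exact (RingQuot.mkAlgHom_rel K DStdRel.r1).symm
    have hz : RingQuot.mkAlgHom K (DStdRel K (n + 1)) (Dg K (DGen.a ((n : ℕ) : Fin (n + 1))))
        * RingQuot.mkAlgHom K (DStdRel K (n + 1)) (Dg K (DGen.a 0)) = 0 := by
      rw [← map_mul]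
      have := RingQuot.mkAlgHom_rel K (DStdRel.r2 (K := K) (m := n + 1))
      rw [map_zero] at this
      exact this
    have hsplit : Dapath K (n + 1) 0 (n + 1) * Dapath K (n + 1) 0 (n + 1)
        = Dapath K (n + 1) 0 n * ((Dg K (DGen.a ((n : ℕ) : Fin (n + 1))) * Dg K (DGen.a 0))
          * Dapath K (n + 1) 1 n) := by
      nth_rewrite 2 [D9.Dapath_cons K 0 n]
      rw [D9.Dapath_snoc K 0 n]
      rw [show ((0 + n : ℕ) : Fin (n + 1)) = ((n : ℕ) : Fin (n + 1)) by norm_num,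
        show ((0 : ℕ) : Fin (n + 1)) = (0 : Fin (n + 1)) from Nat.cast_zero,
        show (0 + 1 : ℕ) = 1 from rfl]
      simp only [mul_assoc]
    have h4 : RingQuot.mkAlgHom K (DStdRel K (n + 1)) (Dg K DGen.b) ^ 4
        = RingQuot.mkAlgHom K (DStdRel K (n + 1))
            (Dapath K (n + 1) 0 (n + 1) * Dapath K (n + 1) 0 (n + 1)) := by
      rw [show (4 : ℕ) = 2 + 2 from rfl, pow_add, hb2, map_mul]
    rw [h4, hsplit]
    simp only [map_mul]
    rw [hz]
    simp


end
end
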